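/- arXiv:1008.1462 — 2 statements merged into one kernel-verified Lean document; each statement's English description precedes it below -/
import Mathlib

section
/- Let λ, μ be multipartitions of n and s a standard λ-tableau. Suppose there exist integers a < b lying in the same row of t^μ and in the same column of s. Then there exist w in the symmetric group on {a, a+1, ..., b} and an integer a ≤ c < b such that: (i) sw is standard; (ii) ℓ(d(s)w) = ℓ(d(s)) + ℓ(w); (iii) c and c+1 lie in the same row of t^μ and in the same column of sw. -/
open scoped Classical

noncomputable section

namespace SpechtInduction

/-- A node `(l, r, c)`: component `l`, row `r`, column `c` (all 0-indexed). -/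
abbrev Node : Type := ℕ × ℕ × ℕ

/-- A multicomposition of `n` with `ℓ` components, each a list of row lengths. -/
structure Multicomp (ℓ n : ℕ) where
  parts : List (List ℕ)
  len_eq : parts.length = ℓ
  size_eq : (parts.map List.sum).sum = n

namespace Multicomp

variable {ℓ n : ℕ}

def rowLen (μ : Multicomp ℓ n) (l r : ℕ) : ℕ := (μ.parts.getD l []).getD r 0

def mem (μ : Multicomp ℓ n) (x : Node) : Prop := x.2.2 < μ.rowLen x.1 x.2.1

def compSize (μ : Multicomp ℓ n) (l : ℕ) : ℕ := (μ.parts.getD l []).sum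

/-- The partial sums appearing in the dominance order. -/
def psum (μ : Multicomp ℓ n) (l i : ℕ) : ℕ :=
  (∑ k ∈ Finset.range l, μ.compSize k) + ∑ j ∈ Finset.range i, μ.rowLen l j

/-- The dominance order `lam ⊵ mu` on multicompositions. -/
def Dominates (lam mu : Multicomp ℓ n) : Prop := ∀ l i, mu.psum l i ≤ lam.psum l i

/-- Each component is a (weakly decreasing) partition. -/
def IsMultipartition (μ : Multicomp ℓ n) : Prop := ∀ l r, μ.rowLen l (r+1) ≤ μ.rowLen l r

end Multicomp

/-- A `μ`-tableau, recorded by the position function sending each entry `k ∈ {1,…,n}`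
to the node it occupies: a bijection onto the diagram of `μ`. -/
def IsTableau {ℓ n : ℕ} (μ : Multicomp ℓ n) (pos : ℕ → Node) : Prop :=
  (∀ j k, 1 ≤ j → j ≤ n → 1 ≤ k → k ≤ n → pos j = pos k → j = k) ∧
  (∀ k, 1 ≤ k → k ≤ n → μ.mem (pos k)) ∧
  (∀ x, μ.mem x → ∃ k, 1 ≤ k ∧ k ≤ n ∧ pos k = x)

/-- Row standard: entries increase along the rows. -/
def RowStandard {ℓ n : ℕ} (μ : Multicomp ℓ n) (pos : ℕ → Node) : Prop :=
  IsTableau μ pos ∧ ∀ j k, 1 ≤ j → j ≤ n → 1 ≤ k → k ≤ n →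
    (pos j).1 = (pos k).1 → (pos j).2.1 = (pos k).2.1 → (pos j).2.2 < (pos k).2.2 → j < k

/-- Column standard (= conjugate is row standard): entries increase down the columns. -/
def ColStandard {ℓ n : ℕ} (μ : Multicomp ℓ n) (pos : ℕ → Node) : Prop :=
  IsTableau μ pos ∧ ∀ j k, 1 ≤ j → j ≤ n → 1 ≤ k → k ≤ n →
    (pos j).1 = (pos k).1 → (pos j).2.2 = (pos k).2.2 → (pos j).2.1 < (pos k).2.1 → j < k

/-- Standard tableau: the tableau and its conjugate are both row standard. -/
def StandardTab {ℓ n : ℕ} (μ : Multicomp ℓ n) (pos : ℕ → Node) : Prop :=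
  RowStandard μ pos ∧ ColStandard μ pos

/-- Number of entries `≤ m` lying in row `(l,r)`. -/
def cnt (pos : ℕ → Node) (m l r : ℕ) : ℕ :=
  ((Finset.Icc 1 m).filter fun k => (pos k).1 = l ∧ (pos k).2.1 = r).card

/-- Number of entries `≤ m` lying in column `c` of component `l`. -/
def ccnt (pos : ℕ → Node) (m l c : ℕ) : ℕ :=
  ((Finset.Icc 1 m).filter fun k => (pos k).1 = l ∧ (pos k).2.2 = c).card

/-- Number of entries `≤ m` lying in component `l`. -/
def compcnt (pos : ℕ → Node) (m l : ℕ) : ℕ :=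
  ((Finset.Icc 1 m).filter fun k => (pos k).1 = l).card

/-- Dominance partial sums of the shape `Shape(t_m)` of the subtableau on entries `1,…,m`. -/
def tabPsum (pos : ℕ → Node) (m l i : ℕ) : ℕ :=
  (∑ k ∈ Finset.range l, compcnt pos m k) + ∑ j ∈ Finset.range i, cnt pos m l j

/-- Dominance order `s ⊵ t` on tableaux with `n` entries:
`Shape(s_m) ⊵ Shape(t_m)` for all `1 ≤ m ≤ n`. -/
def TabDominates (n : ℕ) (s t : ℕ → Node) : Prop :=
  ∀ m l i, 1 ≤ m → m ≤ n → tabPsum t m l i ≤ tabPsum s m l i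

/-- Dominance partial sums of the shape of the *conjugate* of the subtableau `pos_m`,
for a tableau with `ℓ` components (components get reversed, rows and columns swapped). -/
def conjPsum (ℓ : ℕ) (pos : ℕ → Node) (m l i : ℕ) : ℕ :=
  (∑ k ∈ Finset.range l, compcnt pos m (ℓ - 1 - k)) +
    ∑ j ∈ Finset.range i, ccnt pos m (ℓ - 1 - l) j

/-- `t' ⊵ s'`: the conjugate of `t` dominates the conjugate of `s`. -/
def ConjTabDominates (ℓ n : ℕ) (t s : ℕ → Node) : Prop :=
  ∀ m l i, 1 ≤ m → m ≤ n → conjPsum ℓ s m l i ≤ conjPsum ℓ t m l i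

/-- `u' ⊵ t`: the conjugate of `u` dominates `t`. -/
def ConjDomTab (ℓ n : ℕ) (u t : ℕ → Node) : Prop :=
  ∀ m l i, 1 ≤ m → m ≤ n → tabPsum t m l i ≤ conjPsum ℓ u m l i

/-- Lexicographic (row reading) order on nodes: by component, then row, then column. -/
def nodeLex (x y : Node) : Prop :=
  x.1 < y.1 ∨ (x.1 = y.1 ∧ (x.2.1 < y.2.1 ∨ (x.2.1 = y.2.1 ∧ x.2.2 < y.2.2)))

/-- `pos` is the row-reading tableau `t^μ` of `μ`: entries filled in order along
the rows of each component in turn. -/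
def IsRowReading {ℓ n : ℕ} (μ : Multicomp ℓ n) (pos : ℕ → Node) : Prop :=
  IsTableau μ pos ∧ ∀ j k, 1 ≤ j → j ≤ n → 1 ≤ k → k ≤ n → (j < k ↔ nodeLex (pos j) (pos k))

/-- Column reading order on nodes: components from last to first, then columns, then rows. -/
def nodeColLex (x y : Node) : Prop :=
  y.1 < x.1 ∨ (x.1 = y.1 ∧ (x.2.2 < y.2.2 ∨ (x.2.2 = y.2.2 ∧ x.2.1 < y.2.1)))

/-- `pos` is the column-reading tableau `t_μ` of `μ`: entries filled in order down the
columns, from the last component to the first. -/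
def IsColReading {ℓ n : ℕ} (μ : Multicomp ℓ n) (pos : ℕ → Node) : Prop :=
  IsTableau μ pos ∧ ∀ j k, 1 ≤ j → j ≤ n → 1 ≤ k → k ≤ n → (j < k ↔ nodeColLex (pos j) (pos k))

/-- `w` lies in the "symmetric group on `{a,…,b}`": it fixes every point outside `[a,b]`. -/
def FixesOutside (w : Equiv.Perm ℕ) (a b : ℕ) : Prop := ∀ k, k < a ∨ b < k → w k = k

/-- Coxeter length of a permutation of `{1,…,n}`, as the number of inversions. -/
def permLength (n : ℕ) (w : Equiv.Perm ℕ) : ℕ :=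
  (((Finset.Icc 1 n) ×ˢ (Finset.Icc 1 n)).filter fun p => p.1 < p.2 ∧ w p.2 < w p.1).card

/-- Right action of a permutation on a tableau (position function). -/
def actTab (pos : ℕ → Node) (w : Equiv.Perm ℕ) : ℕ → Node := fun k => pos (w k)

/-- `d` is the permutation `d(pos)` with `pos = tpos · d`, `tpos` the reference tableau. -/
def IsDPerm (n : ℕ) (tpos pos : ℕ → Node) (d : Equiv.Perm ℕ) : Prop :=
  FixesOutside d 1 n ∧ ∀ k, 1 ≤ k → k ≤ n → pos k = tpos (d k)

/-- The simple transposition `s_i = (i, i+1)`. -/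
def swapP (i : ℕ) : Equiv.Perm ℕ := Equiv.swap i (i + 1)

/-- The product `s_{i₁} ⋯ s_{i_k}` of a word in the Coxeter generators. -/
def wordProd (L : List ℕ) : Equiv.Perm ℕ := (L.map swapP).prod

/-- A reduced word for its product, using generators `s_1,…,s_{n-1}`. -/
def IsReducedWord (n : ℕ) (L : List ℕ) : Prop :=
  (∀ i ∈ L, 1 ≤ i ∧ i < n) ∧ L.length = permLength n (wordProd L)

/-- Bruhat order on `S_n`: some reduced expression of `u` is a subexpression of some
reduced expression of `w`. -/
def BruhatLE (n : ℕ) (u w : Equiv.Perm ℕ) : Prop :=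
  ∃ ww uw : List ℕ, IsReducedWord n ww ∧ wordProd ww = w ∧
    uw.Sublist ww ∧ IsReducedWord n uw ∧ wordProd uw = u

/-- Membership in the Young subgroup `S_μ`: `w` fixes `[1,n]` setwise, preserving each
row of the reference row-reading tableau `tpos = t^μ`. -/
def YoungMem (n : ℕ) (tpos : ℕ → Node) (w : Equiv.Perm ℕ) : Prop :=
  FixesOutside w 1 n ∧ ∀ k, 1 ≤ k → k ≤ n →
    (tpos (w k)).1 = (tpos k).1 ∧ (tpos (w k)).2.1 = (tpos k).2.1

/-- `accSize μ k = |μ^(1)| + ⋯ + |μ^(k)|`. -/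
def accSize {ℓ n : ℕ} (μ : Multicomp ℓ n) (k : ℕ) : ℕ := ∑ j ∈ Finset.range k, μ.compSize j

/-- The content of a node, with `ξinv` a fixed inverse of `ξ`:
`ξ^(c-r) Q_l` if `ξ ≠ 1` and `c - r + Q_l` if `ξ = 1`. -/
def contOfR {R : Type*} [CommRing R] (ξ ξinv : R) (Q : ℕ → R) (x : Node) : R :=
  if ξ = 1 then ((x.2.2 : R) - (x.2.1 : R)) + Q (x.1 + 1)
  else ξ ^ x.2.2 * ξinv ^ x.2.1 * Q (x.1 + 1)

/-- The set of contents `cont_s(k)` as `s` ranges over all standard tableaux of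
multipartitions of `n`. -/
def ContSet (ℓ n : ℕ) {R : Type*} [CommRing R] (ξ ξinv : R) (Q : ℕ → R) (k : ℕ) : Set R :=
  {c | ∃ (μ : Multicomp ℓ n) (pos : ℕ → Node), μ.IsMultipartition ∧ StandardTab μ pos ∧
        c = contOfR ξ ξinv Q (pos k)}

/-- The cyclotomic Hecke algebra of type `G(ℓ,1,n)`: an `R`-algebra `A` equipped with
generators satisfying the defining relations, together with the elements `T_w` and the
`*` anti-involution fixing the generators. -/
structure Hecke (R : Type*) [CommRing R] (A : Type*) [Ring A] [Algebra R A]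
    (n ℓ : ℕ) (ξ : R) (Q : ℕ → R) where
  L : ℕ → A
  T : ℕ → A
  Tw : Equiv.Perm ℕ → A
  star : A →ₗ[R] A
  cyclotomic : ((List.range ℓ).map fun k => L 1 - algebraMap R A (Q (k + 1))).prod = 0
  LL : ∀ r t, L r * L t = L t * L r
  quad : ∀ r, 1 ≤ r → r < n → (T r + 1) * (T r - algebraMap R A ξ) = 0
  TL : ∀ r, 1 ≤ r → r < n →
      T r * L r + (if ξ = 1 then 1 else 0) = L (r + 1) * (T r - algebraMap R A ξ + 1)
  braid : ∀ s, 1 ≤ s → s + 1 < n → T s * T (s + 1) * T s = T (s + 1) * T s * T (s + 1)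
  TLfar : ∀ r t, 1 ≤ r → r < n → t ≠ r → t ≠ r + 1 → T r * L t = L t * T r
  TTfar : ∀ r s, 1 ≤ r → r < n → 1 ≤ s → s < n → (r + 1 < s ∨ s + 1 < r) →
      T r * T s = T s * T r
  Tw_one : Tw 1 = 1
  Tw_mul : ∀ w i, 1 ≤ i → i < n → permLength n w < permLength n (w * swapP i) →
      Tw (w * swapP i) = Tw w * T i
  star_mul : ∀ a b, star (a * b) = star b * star a
  star_one : star 1 = 1
  star_L : ∀ r, star (L r) = L r
  star_T : ∀ r, star (T r) = T r

namespace Hecke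

variable {R : Type*} [CommRing R] {A : Type*} [Ring A] [Algebra R A]
  {n ℓ : ℕ} {ξ : R} {Q : ℕ → R}

/-- `x_μ = Σ_{w ∈ S_μ} T_w`, where `tpos = t^μ`. -/
def xElt (h : Hecke R A n ℓ ξ Q) (tpos : ℕ → Node) : A :=
  ∑ᶠ (w : Equiv.Perm ℕ) (_ : YoungMem n tpos w), h.Tw w

/-- `y_μ = Σ_{w ∈ S_μ} (-ξ)^{-ℓ(w)} T_w`. -/
def yElt (h : Hecke R A n ℓ ξ Q) (ξinv : R) (tpos : ℕ → Node) : A :=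
  ∑ᶠ (w : Equiv.Perm ℕ) (_ : YoungMem n tpos w), ((-ξinv) ^ permLength n w) • h.Tw w

/-- `u⁺_μ = Π_{k=2}^{ℓ} Π_{m=1}^{|μ^(1)|+⋯+|μ^(k-1)|} (L_m - Q_k)`. -/
def uPlus (h : Hecke R A n ℓ ξ Q) (μ : Multicomp ℓ n) : A :=
  ((List.range' 2 (ℓ - 1)).map fun k =>
    ((List.range' 1 (accSize μ (k - 1))).map fun m => h.L m - algebraMap R A (Q k)).prod).prod

/-- `u⁻_μ = Π_{k=1}^{ℓ-1} Π_{m=1}^{|μ^(1)|+⋯+|μ^(ℓ-k+1)|} (L_m - Q_k)`. -/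
def uMinus (h : Hecke R A n ℓ ξ Q) (μ : Multicomp ℓ n) : A :=
  ((List.range' 1 (ℓ - 1)).map fun k =>
    ((List.range' 1 (accSize μ (ℓ - k + 1))).map fun m => h.L m - algebraMap R A (Q k)).prod).prod

/-- `m_μ = u⁺_μ x_μ` (here `tpos = t^μ`). -/
def mmu (h : Hecke R A n ℓ ξ Q) (μ : Multicomp ℓ n) (tpos : ℕ → Node) : A :=
  h.uPlus μ * h.xElt tpos

/-- `n_μ = u⁻_μ y_μ`. -/
def nmu (h : Hecke R A n ℓ ξ Q) (ξinv : R) (μ : Multicomp ℓ n) (tpos : ℕ → Node) : A :=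
  h.uMinus μ * h.yElt ξinv tpos

/-- The Murphy basis element `m_{st} = T_{d(s)}^* m_μ T_{d(t)}`. -/
def mst (h : Hecke R A n ℓ ξ Q) (μ : Multicomp ℓ n) (tpos : ℕ → Node)
    (ds dt : Equiv.Perm ℕ) : A :=
  h.star (h.Tw ds) * h.mmu μ tpos * h.Tw dt

/-- The dual Murphy basis element `n_{st} = T_{d(s)}^* n_μ T_{d(t)}`. -/
def nst (h : Hecke R A n ℓ ξ Q) (ξinv : R) (μ : Multicomp ℓ n) (tpos : ℕ → Node)
    (ds dt : Equiv.Perm ℕ) : A :=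
  h.star (h.Tw ds) * h.nmu ξinv μ tpos * h.Tw dt

end Hecke

/-- The element `F_t = Π_{k=1}^n Π_{c ∈ contents, c ≠ cont_t(k)}
`(L_k - c)/(cont_t(k) - c)` of the split semisimple cyclotomic Hecke algebra. -/
def Ftab {K : Type*} [Field K] {A : Type*} [Ring A] [Algebra K A] {n ℓ : ℕ} {ξ : K}
    {Q : ℕ → K} (h : Hecke K A n ℓ ξ Q)
    (hfin : ∀ k, (ContSet ℓ n ξ ξ⁻¹ Q k).Finite) (t : ℕ → Node) : A :=
  ((List.range n).map fun k0 =>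
    Finset.noncommProd
      (((hfin (k0 + 1)).toFinset).filter fun c => c ≠ contOfR ξ ξ⁻¹ Q (t (k0 + 1)))
      (fun c => algebraMap K A ((contOfR ξ ξ⁻¹ Q (t (k0 + 1)) - c)⁻¹) *
        (h.L (k0 + 1) - algebraMap K A c))
      (by
        intro a _ b _ _
        have hc : ∀ (r : K) (z : A), Commute (algebraMap K A r) z := fun r z =>
          Algebra.commutes r z
        have c1 : Commute (h.L (k0 + 1) - algebraMap K A a)
            (h.L (k0 + 1) - algebraMap K A b) :=
          Commute.sub_left ((Commute.refl (h.L (k0 + 1))).sub_right ((hc b _).symm))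
            (hc a _)
        exact Commute.mul_left (hc _ _)
          (Commute.mul_right ((hc _ _).symm) c1)
        )).prod

/-- The seminormal basis element `f_{st} = F_s m_{st} F_t`.  Here `tpos = t^μ` and
`ds, dt` are the permutations with `s = t^μ d(s)`, `t = t^μ d(t)`. -/
def fElt {K : Type*} [Field K] {A : Type*} [Ring A] [Algebra K A] {n ℓ : ℕ} {ξ : K}
    {Q : ℕ → K} (h : Hecke K A n ℓ ξ Q)
    (hfin : ∀ k, (ContSet ℓ n ξ ξ⁻¹ Q k).Finite) (μ : Multicomp ℓ n)
    (tpos spos tpos' : ℕ → Node) (ds dt : Equiv.Perm ℕ) : A :=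
  Ftab h hfin spos * h.mst μ tpos ds dt * Ftab h hfin tpos'

/-- Semisimplicity of the cyclotomic Hecke algebra, in the equivalent combinatorial form:
contents separate standard tableaux. -/
def SeparatedContents (ℓ n : ℕ) {R : Type*} [CommRing R] (ξ ξinv : R) (Q : ℕ → R) : Prop :=
  ∀ (μ ν : Multicomp ℓ n) (s t : ℕ → Node), μ.IsMultipartition → ν.IsMultipartition →
    StandardTab μ s → StandardTab ν t →
    (∀ k, 1 ≤ k → k ≤ n → contOfR ξ ξinv Q (s k) = contOfR ξ ξinv Q (t k)) →
    ∀ k, 1 ≤ k → k ≤ n → s k = t k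

/-! ## Residues, degrees and the quiver combinatorics -/

/-- The residue of a node: `c - r + κ_l (mod e)`. -/
def resOf (e : ℕ) (κ : ℕ → ℤ) (x : Node) : ZMod e :=
  (((x.2.2 : ℤ) - (x.2.1 : ℤ) + κ x.1 : ℤ) : ZMod e)

/-- The entries of the Cartan matrix of the quiver `Γ_e`. -/
def cartanInt (e : ℕ) (i j : ZMod e) : ℤ :=
  (if i = j then 2 else 0) + (if j = i + 1 ∧ i ≠ j then -1 else 0) +
    (if j = i - 1 ∧ i ≠ j then -1 else 0)

/-- `x` is an addable node of the shape with row lengths `f` (with `ℓ` components). -/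
def AddableNode (f : ℕ → ℕ → ℕ) (ℓ : ℕ) (x : Node) : Prop :=
  x.1 < ℓ ∧ x.2.2 = f x.1 x.2.1 ∧ (x.2.1 = 0 ∨ x.2.2 < f x.1 (x.2.1 - 1))

/-- `x` is a removable node of the shape with row lengths `f`. -/
def RemovableNode (f : ℕ → ℕ → ℕ) (ℓ : ℕ) (x : Node) : Prop :=
  x.1 < ℓ ∧ x.2.2 + 1 = f x.1 x.2.1 ∧ f x.1 (x.2.1 + 1) ≤ x.2.2

/-- `x` is strictly below `y`. -/
def Below (x y : Node) : Prop := y.1 < x.1 ∨ (x.1 = y.1 ∧ y.2.1 < x.2.1)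

/-- A finite region containing all relevant nodes. -/
def nodeRegion (ℓ n : ℕ) : Finset Node :=
  (Finset.range ℓ) ×ˢ (Finset.range (n + 1)) ×ˢ (Finset.range (n + 1))

/-- `d_A(μ) = #{addable i-nodes below A} - #{removable i-nodes below A}` (same residue). -/
def dBelow (e ℓ n : ℕ) (κ : ℕ → ℤ) (f : ℕ → ℕ → ℕ) (A : Node) : ℤ :=
  ((((nodeRegion ℓ n).filter fun x =>
      AddableNode f ℓ x ∧ resOf e κ x = resOf e κ A ∧ Below x A).card : ℤ)) -
  (((nodeRegion ℓ n).filter fun x =>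
      RemovableNode f ℓ x ∧ resOf e κ x = resOf e κ A ∧ Below x A).card : ℤ)

/-- `d^A(μ)`: the same with "above" in place of "below". -/
def dAbove (e ℓ n : ℕ) (κ : ℕ → ℤ) (f : ℕ → ℕ → ℕ) (A : Node) : ℤ :=
  ((((nodeRegion ℓ n).filter fun x =>
      AddableNode f ℓ x ∧ resOf e κ x = resOf e κ A ∧ Below A x).card : ℤ)) -
  (((nodeRegion ℓ n).filter fun x =>
      RemovableNode f ℓ x ∧ resOf e κ x = resOf e κ A ∧ Below A x).card : ℤ)

/-- The shape (row-length function) of the subtableau of `pos` on entries `1,…,m`. -/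
def subShape (pos : ℕ → Node) (m : ℕ) : ℕ → ℕ → ℕ := fun l r => cnt pos m l r

/-- The Brundan–Kleshchev–Wang degree of a standard tableau. -/
def degTab (e ℓ n : ℕ) (κ : ℕ → ℤ) (pos : ℕ → Node) : ℤ :=
  ∑ k ∈ Finset.range n, dBelow e ℓ n κ (subShape pos k) (pos (k + 1))

/-- The codegree of a standard tableau. -/
def codegTab (e ℓ n : ℕ) (κ : ℕ → ℤ) (pos : ℕ → Node) : ℤ :=
  ∑ k ∈ Finset.range n, dAbove e ℓ n κ (subShape pos k) (pos (k + 1))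

/-- `(Λ, β)` where `β = Σ_k α_{res(k)}` for the residue sequence of `pos`. -/
def lamBeta (e ℓ n : ℕ) (κ : ℕ → ℤ) (pos : ℕ → Node) : ℤ :=
  ∑ k ∈ Finset.range n,
    (((Finset.range ℓ).filter fun l => ((κ l : ZMod e)) = resOf e κ (pos (k + 1))).card : ℤ)

/-- `(β, β)` for `β = Σ_k α_{res(k)}`. -/
def betaBeta (e ℓ n : ℕ) (κ : ℕ → ℤ) (pos : ℕ → Node) : ℤ :=
  ∑ j ∈ Finset.range n, ∑ k ∈ Finset.range n,
    cartanInt e (resOf e κ (pos (j + 1))) (resOf e κ (pos (k + 1)))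

/-- The defect `(Λ, β) - (β, β)/2` of the block containing `pos`. -/
def defectOf (e ℓ n : ℕ) (κ : ℕ → ℤ) (pos : ℕ → Node) : ℤ :=
  lamBeta e ℓ n κ pos - betaBeta e ℓ n κ pos / 2

/-- The conjugate of a node (for a shape with `ℓ` components). -/
def conjNode (ℓ : ℕ) (x : Node) : Node := (ℓ - 1 - x.1, x.2.2, x.2.1)

/-- The sequence obtained by swapping places `s` and `s+1`. -/
def swapSeq {e : ℕ} (s : ℕ) (i : ℕ → ZMod e) : ℕ → ZMod e :=
  fun k => if k = s then i (s + 1) else if k = s + 1 then i s else i k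


/-- The cyclotomic quiver Hecke (KLR) algebra `R_n^Λ` of type `Γ_e`: an `R`-algebra `A`
with generators satisfying the KLR relations, together with its grading and the graded
anti-involution fixing the generators.  Idempotents are indexed by residue sequences
`i : ℕ → ZMod e` (only the values at `1,…,n` matter); `Λm j = (Λ, α_j)`. -/
structure KLR (R : Type*) [CommRing R] (A : Type*) [Ring A] [Algebra R A]
    (e n : ℕ) (Λm : ZMod e → ℕ) where
  E : (ℕ → ZMod e) → A
  Y : ℕ → A
  Psi : ℕ → A
  star : A →ₗ[R] A
  GS : ℤ → Submodule R A
  E_ext : ∀ i j : ℕ → ZMod e, (∀ k, 1 ≤ k → k ≤ n → i k = j k) → E i = E j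
  orth : ∀ i j : ℕ → ZMod e,
      E i * E j = if (∀ k, 1 ≤ k → k ≤ n → i k = j k) then E i else 0
  sumE : ∀ S : Finset (ℕ → ZMod e),
      (∀ j ∈ S, ∀ j' ∈ S, (∀ k, 1 ≤ k → k ≤ n → j k = j' k) → j = j') →
      (∀ i : ℕ → ZMod e, ∃ j ∈ S, ∀ k, 1 ≤ k → k ≤ n → i k = j k) →
      ∑ j ∈ S, E j = 1
  cyc : ∀ i : ℕ → ZMod e, Y 1 ^ (Λm (i 1)) * E i = 0
  YE : ∀ (i : ℕ → ZMod e) (r : ℕ), Y r * E i = E i * Y r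
  PsiE : ∀ (i : ℕ → ZMod e) (s : ℕ), Psi s * E i = E (swapSeq s i) * Psi s
  YY : ∀ r s, Y r * Y s = Y s * Y r
  PsiY : ∀ r s, 1 ≤ s → s < n → r ≠ s → r ≠ s + 1 → Psi s * Y r = Y r * Psi s
  PsiPsi : ∀ r s, r + 1 < s ∨ s + 1 < r → Psi r * Psi s = Psi s * Psi r
  PsiYE : ∀ (i : ℕ → ZMod e) (r : ℕ), 1 ≤ r → r < n →
      Psi r * Y (r + 1) * E i =
        (if i r = i (r + 1) then Y r * Psi r + 1 else Y r * Psi r) * E i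
  YPsiE : ∀ (i : ℕ → ZMod e) (r : ℕ), 1 ≤ r → r < n →
      Y (r + 1) * Psi r * E i =
        (if i r = i (r + 1) then Psi r * Y r + 1 else Psi r * Y r) * E i
  PsiSq : ∀ (i : ℕ → ZMod e) (r : ℕ), 1 ≤ r → r < n →
      Psi r * Psi r * E i =
        if i r = i (r + 1) then 0
        else if i (r + 1) ≠ i r + 1 ∧ i (r + 1) ≠ i r - 1 then E i
        else if e ≠ 2 ∧ i (r + 1) = i r + 1 then (Y (r + 1) - Y r) * E i
        else if e ≠ 2 ∧ i (r + 1) = i r - 1 then (Y r - Y (r + 1)) * E i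
        else (Y (r + 1) - Y r) * (Y r - Y (r + 1)) * E i
  braid : ∀ (i : ℕ → ZMod e) (r : ℕ), 1 ≤ r → r + 1 < n →
      Psi r * Psi (r + 1) * Psi r * E i =
        (if e ≠ 2 ∧ i (r + 2) = i r ∧ i (r + 1) = i r + 1 then
            Psi (r + 1) * Psi r * Psi (r + 1) + 1
         else if e ≠ 2 ∧ i (r + 2) = i r ∧ i r = i (r + 1) + 1 then
            Psi (r + 1) * Psi r * Psi (r + 1) - 1
         else if e = 2 ∧ i (r + 2) = i r ∧ i r = i (r + 1) + 1 then
            Psi (r + 1) * Psi r * Psi (r + 1) + Y r - Y (r + 1) - Y (r + 1) + Y (r + 2)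
         else Psi (r + 1) * Psi r * Psi (r + 1)) * E i
  star_mul : ∀ a b, star (a * b) = star b * star a
  star_E : ∀ i, star (E i) = E i
  star_Y : ∀ r, star (Y r) = Y r
  star_Psi : ∀ s, star (Psi s) = Psi s
  E_mem : ∀ i, E i ∈ GS 0
  Y_mem : ∀ r, Y r ∈ GS 2
  Psi_mem : ∀ (i : ℕ → ZMod e) (s : ℕ), Psi s * E i ∈ GS (-(cartanInt e (i s) (i (s + 1))))
  GS_mul : ∀ (d d' : ℤ) (a b : A), a ∈ GS d → b ∈ GS d' → a * b ∈ GS (d + d')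

namespace KLR

variable {R : Type*} [CommRing R] {A : Type*} [Ring A] [Algebra R A]
  {e n : ℕ} {Λm : ZMod e → ℕ}

/-- `ψ_{i₁} ⋯ ψ_{i_k}` for a (reduced) word. -/
def psiWord (Kk : KLR R A e n Λm) (L : List ℕ) : A := (L.map Kk.Psi).prod

/-- The residue sequence of a tableau. -/
def resSeq (e : ℕ) (κ : ℕ → ℤ) (pos : ℕ → Node) : ℕ → ZMod e := fun k => resOf e κ (pos k)

/-- The monomial `y_μ = y_1^{d_1} ⋯ y_n^{d_n}` of Hu–Mathas, where `tpos = t^μ` and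
`d_m = d_{A_m}(μ_m)`. -/
def yMu (Kk : KLR R A e n Λm) (ℓ : ℕ) (κ : ℕ → ℤ) (tpos : ℕ → Node) : A :=
  ((List.range n).map fun m0 =>
    Kk.Y (m0 + 1) ^ (dBelow e ℓ n κ (subShape tpos m0) (tpos (m0 + 1))).toNat).prod

/-- The monomial `y'_μ = y_1^{d'_1} ⋯ y_n^{d'_n}`, computed from `t_{μ'}`, the conjugate
of `tpos = t^μ`, with `d'_m = d^{A'_m}(μ'_m)`. -/
def yMu' (Kk : KLR R A e n Λm) (ℓ : ℕ) (κ : ℕ → ℤ) (tpos : ℕ → Node) : A :=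
  ((List.range n).map fun m0 =>
    Kk.Y (m0 + 1) ^
      (dAbove e ℓ n κ (subShape (fun k => conjNode ℓ (tpos k)) m0)
        (conjNode ℓ (tpos (m0 + 1)))).toNat).prod

/-- The Hu–Mathas basis element `ψ_{st} = ψ_{d(s)}^⋆ e_μ y_μ ψ_{d(t)}`, where `tpos = t^μ`
and `ws, wt` are the chosen reduced words for `d(s), d(t)`. -/
def psiST (Kk : KLR R A e n Λm) (ℓ : ℕ) (κ : ℕ → ℤ) (tpos : ℕ → Node)
    (ws wt : List ℕ) : A :=
  Kk.star (Kk.psiWord ws) * Kk.E (resSeq e κ tpos) * Kk.yMu ℓ κ tpos * Kk.psiWord wt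

/-- The dual basis element `ψ'_{st} = ψ_{d(s)}^⋆ e'_μ y'_μ ψ_{d(t)}`, where
`e'_μ = e(res(t_{μ'}))` and `t_{μ'}` is the conjugate of `tpos = t^μ`. -/
def psiST' (Kk : KLR R A e n Λm) (ℓ : ℕ) (κ : ℕ → ℤ) (tpos : ℕ → Node)
    (ws wt : List ℕ) : A :=
  Kk.star (Kk.psiWord ws) * Kk.E (resSeq e κ fun k => conjNode ℓ (tpos k)) *
    Kk.yMu' ℓ κ tpos * Kk.psiWord wt

end KLR


/-! ### Auxiliary machinery for Statement 3 -/

section Statement3Aux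

lemma fixes_apply_mem {w : Equiv.Perm ℕ} {a b k : ℕ} (hw : FixesOutside w a b)
    (h1 : a ≤ k) (h2 : k ≤ b) : a ≤ w k ∧ w k ≤ b := by
  rcases Nat.lt_or_ge (w k) a with h | h
  · have h3 := hw (w k) (Or.inl h)
    have h4 := w.injective h3
    omega
  rcases Nat.lt_or_ge b (w k) with h' | h'
  · have h3 := hw (w k) (Or.inr h')
    have h4 := w.injective h3
    omega
  exact ⟨h, h'⟩

lemma fixes_symm {w : Equiv.Perm ℕ} {a b : ℕ} (hw : FixesOutside w a b) :
    FixesOutside w.symm a b := by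
  intro k hk
  have h1 := hw k hk
  calc w.symm k = w.symm (w k) := by rw [h1]
    _ = k := w.symm_apply_apply k

lemma fixes_range {w : Equiv.Perm ℕ} {a b n : ℕ} (hw : FixesOutside w a b)
    (ha : 1 ≤ a) (hb : b ≤ n) :
    ∀ k, 1 ≤ k → k ≤ n → (1 ≤ w k ∧ w k ≤ n) ∧ (1 ≤ w.symm k ∧ w.symm k ≤ n) := by
  have key : ∀ (u : Equiv.Perm ℕ), FixesOutside u a b → ∀ k, 1 ≤ k → k ≤ n →
      1 ≤ u k ∧ u k ≤ n := by
    intro u hu k h1 h2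
    rcases Nat.lt_or_ge k a with h | h
    · rw [hu k (Or.inl h)]; exact ⟨h1, h2⟩
    rcases Nat.lt_or_ge b k with h' | h'
    · rw [hu k (Or.inr h')]; exact ⟨h1, h2⟩
    have := fixes_apply_mem hu h h'
    omega
  intro k h1 h2
  exact ⟨key w hw k h1 h2, key w.symm (fixes_symm hw) k h1 h2⟩

/-- The set of inversions of a permutation inside `[1,n]`. -/
def invSet (n : ℕ) (w : Equiv.Perm ℕ) : Finset (ℕ × ℕ) :=
  (((Finset.Icc 1 n) ×ˢ (Finset.Icc 1 n)).filter fun p => p.1 < p.2 ∧ w p.2 < w p.1)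

lemma permLength_eq_card (n : ℕ) (w : Equiv.Perm ℕ) :
    permLength n w = (invSet n w).card := rfl

lemma mem_invSet {n : ℕ} {w : Equiv.Perm ℕ} {p : ℕ × ℕ} :
    p ∈ invSet n w ↔
      (1 ≤ p.1 ∧ p.1 ≤ n) ∧ (1 ≤ p.2 ∧ p.2 ≤ n) ∧ p.1 < p.2 ∧ w p.2 < w p.1 := by
  simp only [invSet, Finset.mem_filter, Finset.mem_product, Finset.mem_Icc]
  tauto

lemma mem_invSet' {n : ℕ} {w : Equiv.Perm ℕ} {i j : ℕ} :
    (i, j) ∈ invSet n w ↔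
      (1 ≤ i ∧ i ≤ n) ∧ (1 ≤ j ∧ j ≤ n) ∧ i < j ∧ w j < w i := by
  simp only [invSet, Finset.mem_filter, Finset.mem_product, Finset.mem_Icc]
  tauto

lemma card_symmDiff (n : ℕ) (x y : Equiv.Perm ℕ)
    (hy : ∀ k, 1 ≤ k → k ≤ n → (1 ≤ y k ∧ y k ≤ n) ∧ (1 ≤ y.symm k ∧ y.symm k ≤ n)) :
    ((invSet n (x * y) \ invSet n y) ∪ (invSet n y \ invSet n (x * y))).card
      = (invSet n x).card := by
  apply Finset.card_nbij'
    (i := fun p => if y p.1 < y p.2 then (y p.1, y p.2) else (y p.2, y p.1))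
    (j := fun q => if y.symm q.1 < y.symm q.2 then (y.symm q.1, y.symm q.2)
      else (y.symm q.2, y.symm q.1))
  · -- forward map lands in invSet n x
    intro p hp
    simp only [Finset.mem_coe] at hp ⊢
    rw [Finset.mem_union, Finset.mem_sdiff, Finset.mem_sdiff] at hp
    have hb : (1 ≤ p.1 ∧ p.1 ≤ n) ∧ (1 ≤ p.2 ∧ p.2 ≤ n) ∧ p.1 < p.2 := by
      rcases hp with ⟨h1, _⟩ | ⟨h1, _⟩ <;> rw [mem_invSet] at h1 <;>
        exact ⟨h1.1, h1.2.1, h1.2.2.1⟩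
    have hne : y p.1 ≠ y p.2 := by
      intro hcon
      have := y.injective hcon
      omega
    have hy1 := (hy p.1 hb.1.1 hb.1.2).1
    have hy2 := (hy p.2 hb.2.1.1 hb.2.1.2).1
    rcases hp with ⟨h1, h2⟩ | ⟨h1, h2⟩
    · -- p ∈ invSet (x*y) \ invSet y
      rw [mem_invSet] at h1 h2
      simp only [Equiv.Perm.mul_apply] at h1
      have hord : y p.1 < y p.2 := by omega
      rw [if_pos hord, mem_invSet']
      exact ⟨hy1, hy2, hord, h1.2.2.2⟩
    · rw [mem_invSet] at h1 h2
      simp only [Equiv.Perm.mul_apply] at h2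
      have hord : y p.2 < y p.1 := h1.2.2.2
      have hxne : x (y p.1) ≠ x (y p.2) := fun hcon => hne (x.injective hcon)
      have hxord : x (y p.1) < x (y p.2) := by omega
      rw [if_neg (by omega), mem_invSet']
      exact ⟨hy2, hy1, hord, hxord⟩
  · -- reverse map
    intro q hq
    simp only [Finset.mem_coe] at hq ⊢
    rw [mem_invSet] at hq
    obtain ⟨hq1, hq2, hq3, hq4⟩ := hq
    have hs1 := (hy q.1 hq1.1 hq1.2).2
    have hs2 := (hy q.2 hq2.1 hq2.2).2
    have hne : y.symm q.1 ≠ y.symm q.2 := by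
      intro hcon
      have := y.symm.injective hcon
      omega
    rw [Finset.mem_union, Finset.mem_sdiff, Finset.mem_sdiff]
    by_cases hord : y.symm q.1 < y.symm q.2
    · rw [if_pos hord]
      left
      constructor
      · rw [mem_invSet']
        refine ⟨hs1, hs2, hord, ?_⟩
        show (x * y) (y.symm q.2) < (x * y) (y.symm q.1)
        simp only [Equiv.Perm.mul_apply, Equiv.apply_symm_apply]
        exact hq4
      · rw [mem_invSet']
        intro hcon
        have h5 := hcon.2.2.2
        rw [Equiv.apply_symm_apply, Equiv.apply_symm_apply] at h5
        omega
    · have hord' : y.symm q.2 < y.symm q.1 := by omega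
      rw [if_neg hord]
      right
      constructor
      · rw [mem_invSet']
        refine ⟨hs2, hs1, hord', ?_⟩
        show y (y.symm q.1) < y (y.symm q.2)
        rw [Equiv.apply_symm_apply, Equiv.apply_symm_apply]
        exact hq3
      · rw [mem_invSet']
        intro hcon
        have h5 := hcon.2.2.2
        show False
        have h6 : (x * y) (y.symm q.1) < (x * y) (y.symm q.2) := h5
        simp only [Equiv.Perm.mul_apply, Equiv.apply_symm_apply] at h6
        omega
  · -- left inverse
    intro p hp
    simp only [Finset.mem_coe] at hp
    dsimp only
    have hlt : p.1 < p.2 := by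
      rw [Finset.mem_union, Finset.mem_sdiff, Finset.mem_sdiff] at hp
      rcases hp with ⟨h1, _⟩ | ⟨h1, _⟩ <;> rw [mem_invSet] at h1 <;> exact h1.2.2.1
    by_cases h : y p.1 < y p.2
    · rw [if_pos h]
      show (if y.symm (y p.1) < y.symm (y p.2) then (y.symm (y p.1), y.symm (y p.2))
        else (y.symm (y p.2), y.symm (y p.1))) = p
      simp only [Equiv.symm_apply_apply]
      rw [if_pos hlt]
    · rw [if_neg h]
      show (if y.symm (y p.2) < y.symm (y p.1) then (y.symm (y p.2), y.symm (y p.1))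
        else (y.symm (y p.1), y.symm (y p.2))) = p
      simp only [Equiv.symm_apply_apply]
      rw [if_neg (by omega)]
  · -- right inverse
    intro q hq
    simp only [Finset.mem_coe] at hq
    dsimp only
    have hlt : q.1 < q.2 := by
      rw [mem_invSet] at hq; exact hq.2.2.1
    by_cases h : y.symm q.1 < y.symm q.2
    · rw [if_pos h]
      show (if y (y.symm q.1) < y (y.symm q.2) then (y (y.symm q.1), y (y.symm q.2))
        else (y (y.symm q.2), y (y.symm q.1))) = q
      simp only [Equiv.apply_symm_apply]
      rw [if_pos hlt]
    · rw [if_neg h]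
      show (if y (y.symm q.2) < y (y.symm q.1) then (y (y.symm q.2), y (y.symm q.1))
        else (y (y.symm q.1), y (y.symm q.2))) = q
      simp only [Equiv.apply_symm_apply]
      rw [if_neg (by omega)]

lemma permLength_core (n : ℕ) (x y : Equiv.Perm ℕ)
    (hy : ∀ k, 1 ≤ k → k ≤ n → (1 ≤ y k ∧ y k ≤ n) ∧ (1 ≤ y.symm k ∧ y.symm k ≤ n)) :
    permLength n x + permLength n y
      = permLength n (x * y) + 2 * ((invSet n y \ invSet n (x * y)).card) := by
  have hbij := card_symmDiff n x y hy
  have hdisj : Disjoint (invSet n (x * y) \ invSet n y) (invSet n y \ invSet n (x * y)) :=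
    disjoint_sdiff_sdiff
  rw [Finset.card_union_of_disjoint hdisj] at hbij
  have h1 := Finset.card_sdiff_add_card_inter (invSet n (x * y)) (invSet n y)
  have h2 := Finset.card_sdiff_add_card_inter (invSet n y) (invSet n (x * y))
  have h3 : (invSet n (x * y) ∩ invSet n y).card = (invSet n y ∩ invSet n (x * y)).card := by
    rw [Finset.inter_comm]
  simp only [permLength_eq_card]
  omega

lemma permLength_mul_le (n : ℕ) (x y : Equiv.Perm ℕ)
    (hy : ∀ k, 1 ≤ k → k ≤ n → (1 ≤ y k ∧ y k ≤ n) ∧ (1 ≤ y.symm k ∧ y.symm k ≤ n)) :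
    permLength n (x * y) ≤ permLength n x + permLength n y := by
  have := permLength_core n x y hy
  omega

lemma permLength_mul_eq (n : ℕ) (x y : Equiv.Perm ℕ)
    (hy : ∀ k, 1 ≤ k → k ≤ n → (1 ≤ y k ∧ y k ≤ n) ∧ (1 ≤ y.symm k ∧ y.symm k ≤ n))
    (hcrit : ∀ i j, 1 ≤ i → j ≤ n → i < j → y j < y i → x (y j) < x (y i)) :
    permLength n (x * y) = permLength n x + permLength n y := by
  have hcore := permLength_core n x y hy
  have hempty : invSet n y \ invSet n (x * y) = ∅ := by
    rw [Finset.sdiff_eq_empty_iff_subset]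
    intro p hp
    rw [mem_invSet] at hp ⊢
    refine ⟨hp.1, hp.2.1, hp.2.2.1, ?_⟩
    show x (y p.2) < x (y p.1)
    exact hcrit p.1 p.2 hp.1.1 hp.2.1.2 hp.2.2.1 hp.2.2.2
  rw [hempty] at hcore
  simp only [Finset.card_empty, Nat.mul_zero, Nat.add_zero] at hcore
  omega

lemma permLength_one (n : ℕ) : permLength n (1 : Equiv.Perm ℕ) = 0 := by
  rw [permLength_eq_card, Finset.card_eq_zero]
  unfold invSet
  rw [Finset.filter_eq_empty_iff]
  intro p _
  simp only [Equiv.Perm.one_apply]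
  omega

/-- The cycle sending `m ↦ h` and `k ↦ k+1` for `h ≤ k < m`. -/
def cycP (h m : ℕ) (hm : h ≤ m) : Equiv.Perm ℕ where
  toFun k := if k = m then h else if h ≤ k ∧ k < m then k + 1 else k
  invFun k := if k = h then m else if h < k ∧ k ≤ m then k - 1 else k
  left_inv := by
    intro k
    dsimp only
    split_ifs <;> omega
  right_inv := by
    intro k
    dsimp only
    split_ifs <;> omega

lemma cycP_apply (h m : ℕ) (hm : h ≤ m) (k : ℕ) :
    cycP h m hm k = if k = m then h else if h ≤ k ∧ k < m then k + 1 else k := rfl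

lemma cycP_symm_apply (h m : ℕ) (hm : h ≤ m) (k : ℕ) :
    (cycP h m hm).symm k = if k = h then m else if h < k ∧ k ≤ m then k - 1 else k := rfl

lemma cycP_fixes (h m : ℕ) (hm : h ≤ m) : FixesOutside (cycP h m hm) h m := by
  intro k hk
  rw [cycP_apply]
  split_ifs <;> omega

lemma highLow_lex {x y : Node} {l r : ℕ}
    (hx : x.1 < l ∨ (x.1 = l ∧ x.2.1 ≤ r)) (hy : l < y.1 ∨ (y.1 = l ∧ r < y.2.1)) :
    nodeLex x y := by
  unfold nodeLex
  omega

lemma dperm_lt {n : ℕ} {tl s : ℕ → Node} {ds : Equiv.Perm ℕ}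
    (htl2 : ∀ j k, 1 ≤ j → j ≤ n → 1 ≤ k → k ≤ n → (j < k ↔ nodeLex (tl j) (tl k)))
    (hds : IsDPerm n tl s ds) {p q : ℕ} (hp1 : 1 ≤ p) (hp2 : p ≤ n) (hq1 : 1 ≤ q)
    (hq2 : q ≤ n) (hlex : nodeLex (s p) (s q)) : ds p < ds q := by
  have hp := fixes_apply_mem hds.1 hp1 hp2
  have hq := fixes_apply_mem hds.1 hq1 hq2
  have e1 := hds.2 p hp1 hp2
  have e2 := hds.2 q hq1 hq2
  exact (htl2 (ds p) (ds q) hp.1 hp.2 hq.1 hq.2).2 (by rwa [← e1, ← e2])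

lemma row_interval {ℓ n : ℕ} {mu : Multicomp ℓ n} {tm : ℕ → Node}
    (htm : IsRowReading mu tm) {a b k : ℕ} (ha : 1 ≤ a) (hb : b ≤ n)
    (hrow : (tm a).1 = (tm b).1 ∧ (tm a).2.1 = (tm b).2.1)
    (h1 : a ≤ k) (h2 : k ≤ b) :
    (tm a).1 = (tm k).1 ∧ (tm a).2.1 = (tm k).2.1 := by
  rcases eq_or_lt_of_le h1 with rfl | hak
  · exact ⟨rfl, rfl⟩
  rcases eq_or_lt_of_le h2 with rfl | hkb
  · exact hrow
  have l1 := (htm.2 a k ha (by omega) (by omega) (by omega)).1 hak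
  have l2 := (htm.2 k b (by omega) (by omega) (by omega) hb).1 hkb
  unfold nodeLex at l1 l2
  omega

end Statement3Aux


section MoveLemma

/-- The key move: given `a` with `b` directly below it in the standard tableau `s`,
a window `[h,m] ⊆ [a,b]` whose top `h` is "high" (weakly above the row of `a`) and whose
other values are all "low" (strictly below the row of `a`), cycling the values of the
window preserves standardness and adds lengths. -/
lemma move_lemma {ℓ n : ℕ} {lam : Multicomp ℓ n} (hl : lam.IsMultipartition)
    {tl s : ℕ → Node} {ds : Equiv.Perm ℕ}
    (htl : IsRowReading lam tl) (hs : StandardTab lam s) (hds : IsDPerm n tl s ds)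
    {a b : ℕ} (ha : 1 ≤ a) (hab : a < b) (hbn : b ≤ n)
    (hsb1 : (s b).1 = (s a).1) (hsb2 : (s b).2.1 = (s a).2.1 + 1)
    (hsb3 : (s b).2.2 = (s a).2.2)
    {h m : ℕ} (hah : a ≤ h) (hhm : h < m) (hmb : m ≤ b) (hma : h = a → m < b)
    (hHigh : (s h).1 < (s a).1 ∨ ((s h).1 = (s a).1 ∧ (s h).2.1 ≤ (s a).2.1))
    (hLow : ∀ q, h < q → q ≤ m →
      (s a).1 < (s q).1 ∨ ((s q).1 = (s a).1 ∧ (s a).2.1 < (s q).2.1)) :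
    StandardTab lam (actTab s (cycP h m hhm.le)) ∧
    IsDPerm n tl (actTab s (cycP h m hhm.le)) (ds * cycP h m hhm.le) ∧
    permLength n (ds * cycP h m hhm.le)
      = permLength n ds + permLength n (cycP h m hhm.le) := by
  obtain ⟨⟨⟨hinj, hmem, hsurj⟩, hrowstd⟩, ⟨_, hcolstd⟩⟩ := hs
  have hh1 : 1 ≤ h := le_trans ha hah
  have hhn : h ≤ n := by omega
  have hm1 : 1 ≤ m := by omega
  have hmn : m ≤ n := by omega
  have hanti : ∀ l₀ r₁ r₂, r₁ ≤ r₂ → lam.rowLen l₀ r₂ ≤ lam.rowLen l₀ r₁ :=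
    fun l₀ _ _ h12 => antitone_nat_of_succ_le (hl l₀) h12
  have hmema := hmem a ha (by omega)
  have hmemb := hmem b (by omega) hbn
  unfold Multicomp.mem at hmema hmemb
  -- the crucial geometric fact: no value `q` in `(h, m]` lies in the same column
  -- strictly below `h`.
  have hC : ∀ q, h < q → q ≤ m → (s h).1 = (s q).1 → (s h).2.2 = (s q).2.2 →
      (s h).2.1 < (s q).2.1 → False := by
    intro q hq1 hq2 e1 e2 e3
    have hq1' : 1 ≤ q := by omega
    have hqn : q ≤ n := by omega
    have hLq := hLow q hq1 hq2
    have hcs : (s h).1 = (s a).1 ∧ (s q).1 = (s a).1 ∧ (s h).2.1 ≤ (s a).2.1 ∧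
        (s a).2.1 < (s q).2.1 := by omega
    obtain ⟨ch, cq, rh, rq⟩ := hcs
    have hmemq := hmem q hq1' hqn
    unfold Multicomp.mem at hmemq
    rcases lt_trichotomy (s h).2.2 (s a).2.2 with hlt | heq | hgt
    · -- column strictly left of the column of `a`
      have hmemX : lam.mem ((s a).1, (s a).2.1, (s h).2.2) := by
        show (s h).2.2 < lam.rowLen (s a).1 (s a).2.1
        omega
      obtain ⟨z, hz1, hz2, hz3⟩ := hsurj _ hmemX
      have hz3' : (s z).1 = (s a).1 ∧ (s z).2.1 = (s a).2.1 ∧ (s z).2.2 = (s h).2.2 := by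
        rw [hz3]; exact ⟨rfl, rfl, rfl⟩
      have hza : z < a :=
        hrowstd z a hz1 hz2 ha (by omega) (by omega) (by omega) (by omega)
      have hhz : h ≤ z := by
        rcases eq_or_lt_of_le rh with hr | hr
        · have he : s h = s z := by
            rw [hz3]
            exact Prod.ext ch (Prod.ext hr rfl)
          have := hinj h z hh1 hhn hz1 hz2 he
          omega
        · have := hcolstd h z hh1 hhn hz1 hz2 (by omega) (by omega) (by omega)
          omega
      omega
    · -- same column as `a`
      rcases eq_or_lt_of_le rh with hr | hr
      · have hha : h = a := hinj h a hh1 hhn ha (by omega)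
          (Prod.ext ch (Prod.ext hr heq))
        have hmb' : m < b := hma hha
        rcases Nat.lt_or_ge ((s a).2.1 + 1) (s q).2.1 with hrq | hrq
        · have := hcolstd b q (by omega) hbn hq1' hqn (by omega) (by omega) (by omega)
          omega
        · have he : s q = s b := Prod.ext (by omega) (Prod.ext (by omega) (by omega))
          have := hinj q b hq1' hqn (by omega) hbn he
          omega
      · have := hcolstd h a hh1 hhn ha (by omega) ch (by omega) hr
        omega
    · -- column strictly right of the column of `a`
      have hmemY : lam.mem ((s a).1, (s a).2.1 + 1, (s h).2.2) := by
        show (s h).2.2 < lam.rowLen (s a).1 ((s a).2.1 + 1)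
        have h1 : lam.rowLen (s a).1 (s q).2.1 ≤ lam.rowLen (s a).1 ((s a).2.1 + 1) :=
          hanti _ _ _ (by omega)
        rw [cq] at hmemq
        omega
      obtain ⟨z, hz1, hz2, hz3⟩ := hsurj _ hmemY
      have hz3' : (s z).1 = (s a).1 ∧ (s z).2.1 = (s a).2.1 + 1 ∧
          (s z).2.2 = (s h).2.2 := by
        rw [hz3]; exact ⟨rfl, rfl, rfl⟩
      have hbz : b < z :=
        hrowstd b z (by omega) hbn hz1 hz2 (by omega) (by omega) (by omega)
      have hzq : z ≤ q := by
        rcases Nat.lt_or_ge ((s a).2.1 + 1) (s q).2.1 with hrq | hrq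
        · have := hcolstd z q hz1 hz2 hq1' hqn (by omega) (by omega) (by omega)
          omega
        · have he : s q = s z := by
            rw [hz3]
            exact Prod.ext cq (Prod.ext
              (show (s q).2.1 = (s a).2.1 + 1 by omega)
              (show (s q).2.2 = (s h).2.2 by omega))
          have := hinj q z hq1' hqn hz1 hz2 he
          omega
      omega
  -- order-preservation of the relabelling
  have hkey : ∀ p q, 1 ≤ p → p ≤ n → 1 ≤ q → q ≤ n → p < q →
      (s p).1 = (s q).1 →
      (((s p).2.1 = (s q).2.1 ∧ (s p).2.2 < (s q).2.2) ∨
        ((s p).2.2 = (s q).2.2 ∧ (s p).2.1 < (s q).2.1)) →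
      (cycP h m hhm.le).symm p < (cycP h m hhm.le).symm q := by
    intro p q hp1 hp2 hq1 hq2 hpq hcomp hrc
    by_cases hexc : p = h ∧ h < q ∧ q ≤ m
    · exfalso
      obtain ⟨rfl, hq3, hq4⟩ := hexc
      have hLq := hLow q hq3 hq4
      rcases hrc with ⟨hr, hc⟩ | ⟨hc, hr⟩
      · omega
      · exact hC q hq3 hq4 hcomp hc hr
    · rw [cycP_symm_apply, cycP_symm_apply]
      split_ifs <;> omega
  have hwfix : FixesOutside (cycP h m hhm.le) h m := cycP_fixes h m hhm.le
  have hwrange := fixes_range hwfix hh1 hmn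
  have htab : IsTableau lam (actTab s (cycP h m hhm.le)) := by
    refine ⟨?_, ?_, ?_⟩
    · intro j k hj1 hj2 hk1 hk2 hjk
      have hwj := (hwrange j hj1 hj2).1
      have hwk := (hwrange k hk1 hk2).1
      exact (cycP h m hhm.le).injective (hinj _ _ hwj.1 hwj.2 hwk.1 hwk.2 hjk)
    · intro k hk1 hk2
      have hwk := (hwrange k hk1 hk2).1
      exact hmem _ hwk.1 hwk.2
    · intro x hx
      obtain ⟨k, hk1, hk2, hk3⟩ := hsurj x hx
      refine ⟨(cycP h m hhm.le).symm k, (hwrange k hk1 hk2).2.1,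
        (hwrange k hk1 hk2).2.2, ?_⟩
      show s ((cycP h m hhm.le) ((cycP h m hhm.le).symm k)) = x
      rw [Equiv.apply_symm_apply]
      exact hk3
  refine ⟨⟨⟨htab, ?_⟩, ⟨htab, ?_⟩⟩, ⟨?_, ?_⟩, ?_⟩
  · -- row standardness
    intro j k hj1 hj2 hk1 hk2 hcomp hr hlt
    have hwj := (hwrange j hj1 hj2).1
    have hwk := (hwrange k hk1 hk2).1
    have hpq : (cycP h m hhm.le) j < (cycP h m hhm.le) k :=
      hrowstd _ _ hwj.1 hwj.2 hwk.1 hwk.2 hcomp hr hlt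
    have hres := hkey _ _ hwj.1 hwj.2 hwk.1 hwk.2 hpq hcomp (Or.inl ⟨hr, hlt⟩)
    rwa [Equiv.symm_apply_apply, Equiv.symm_apply_apply] at hres
  · -- column standardness
    intro j k hj1 hj2 hk1 hk2 hcomp hc hlt
    have hwj := (hwrange j hj1 hj2).1
    have hwk := (hwrange k hk1 hk2).1
    have hpq : (cycP h m hhm.le) j < (cycP h m hhm.le) k :=
      hcolstd _ _ hwj.1 hwj.2 hwk.1 hwk.2 hcomp hc hlt
    have hres := hkey _ _ hwj.1 hwj.2 hwk.1 hwk.2 hpq hcomp (Or.inr ⟨hc, hlt⟩)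
    rwa [Equiv.symm_apply_apply, Equiv.symm_apply_apply] at hres
  · -- d-permutation: fixes outside [1, n]
    intro k hk
    have h1 : (cycP h m hhm.le) k = k := hwfix k (by omega)
    show ds ((cycP h m hhm.le) k) = k
    rw [h1]
    exact hds.1 k hk
  · intro k hk1 hk2
    have hwk := (hwrange k hk1 hk2).1
    show s ((cycP h m hhm.le) k) = tl (ds ((cycP h m hhm.le) k))
    exact hds.2 _ hwk.1 hwk.2
  · -- length additivity
    apply permLength_mul_eq n ds (cycP h m hhm.le) (fixes_range hwfix hh1 hmn)
    intro i j hi1 hj2 hij hinv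
    rw [cycP_apply, cycP_apply] at hinv
    have hfacts : h ≤ i ∧ i < m ∧ j = m := by
      split_ifs at hinv <;> omega
    obtain ⟨hfi1, hfi2, hjm⟩ := hfacts
    subst hjm
    have e1 : (cycP h j hhm.le) j = h := by
      rw [cycP_apply, if_pos rfl]
    have e2 : (cycP h j hhm.le) i = i + 1 := by
      rw [cycP_apply, if_neg (by omega), if_pos ⟨hfi1, hfi2⟩]
    rw [e1, e2]
    exact dperm_lt htl.2 hds hh1 hhn (by omega) (by omega)
      (highLow_lex hHigh (hLow (i + 1) (by omega) (by omega)))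

end MoveLemma


section MainAux

lemma aux_main {ℓ n : ℕ} (lam mu : Multicomp ℓ n) (hl : lam.IsMultipartition)
    (tl tm : ℕ → Node) (htl : IsRowReading lam tl) (htm : IsRowReading mu tm)
    (a : ℕ) (ha : 1 ≤ a) :
    ∀ g : ℕ, ∀ b : ℕ, ∀ s : ℕ → Node, ∀ ds : Equiv.Perm ℕ,
      StandardTab lam s → IsDPerm n tl s ds → a < b → b ≤ n →
      ((tm a).1 = (tm b).1 ∧ (tm a).2.1 = (tm b).2.1) →
      ((s a).1 = (s b).1 ∧ (s a).2.2 = (s b).2.2) →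
      b - a ≤ g →
      ∃ (w : Equiv.Perm ℕ) (c : ℕ), FixesOutside w a b ∧ a ≤ c ∧ c < b ∧
        StandardTab lam (actTab s w) ∧
        permLength n (ds * w) = permLength n ds + permLength n w ∧
        ((tm c).1 = (tm (c + 1)).1 ∧ (tm c).2.1 = (tm (c + 1)).2.1) ∧
        ((actTab s w c).1 = (actTab s w (c + 1)).1 ∧
          (actTab s w c).2.2 = (actTab s w (c + 1)).2.2) := by
  intro g
  induction g with
  | zero =>
    intro b s ds _ _ hab _ _ _ hg
    exact absurd hg (by omega)
  | succ g IH =>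
    intro b s ds hs hds hab hbn hrow hcol hg
    by_cases hb1 : b = a + 1
    · -- base case: `b = a + 1`, take `w = 1`, `c = a`.
      subst hb1
      refine ⟨1, a, fun k _ => rfl, le_rfl, by omega, hs, ?_, hrow, hcol⟩
      rw [mul_one, permLength_one]
      omega
    -- so `b ≥ a + 2`
    have hcopy := hs
    obtain ⟨⟨⟨hinj, hmem, hsurj⟩, hrowstd⟩, ⟨_, hcolstd⟩⟩ := hcopy
    have hmema := hmem a ha (by omega)
    have hmemb := hmem b (by omega) hbn
    unfold Multicomp.mem at hmema hmemb
    have hrr : (s a).2.1 < (s b).2.1 := by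
      rcases lt_trichotomy (s a).2.1 (s b).2.1 with h1 | h1 | h1
      · exact h1
      · exfalso
        have he : s a = s b := Prod.ext hcol.1 (Prod.ext h1 hcol.2)
        have := hinj a b ha (by omega) (by omega) hbn he
        omega
      · exfalso
        have := hcolstd b a (by omega) hbn ha (by omega) hcol.1.symm hcol.2.symm h1
        omega
    have hanti : ∀ l₀ r₁ r₂, r₁ ≤ r₂ → lam.rowLen l₀ r₂ ≤ lam.rowLen l₀ r₁ :=
      fun l₀ _ _ h12 => antitone_nat_of_succ_le (hl l₀) h12
    -- the entry `x` directly below `a`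
    have hmemX : lam.mem ((s a).1, (s a).2.1 + 1, (s a).2.2) := by
      show (s a).2.2 < lam.rowLen (s a).1 ((s a).2.1 + 1)
      have h1 : lam.rowLen (s a).1 (s b).2.1 ≤ lam.rowLen (s a).1 ((s a).2.1 + 1) :=
        hanti _ _ _ (by omega)
      rw [← hcol.1] at hmemb
      omega
    obtain ⟨x, hx1, hx2, hx3⟩ := hsurj _ hmemX
    have hx3' : (s x).1 = (s a).1 ∧ (s x).2.1 = (s a).2.1 + 1 ∧ (s x).2.2 = (s a).2.2 := by
      rw [hx3]; exact ⟨rfl, rfl, rfl⟩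
    have hax : a < x := hcolstd a x ha (by omega) hx1 hx2 (by omega) (by omega) (by omega)
    have hxb : x ≤ b := by
      rcases Nat.lt_or_ge ((s a).2.1 + 1) (s b).2.1 with h1 | h1
      · have := hcolstd x b hx1 hx2 (by omega) hbn (by omega) (by omega) (by omega)
        omega
      · have he : s b = s x := by
          rw [hx3]
          exact Prod.ext (show (s b).1 = (s a).1 by omega)
            (Prod.ext (show (s b).2.1 = (s a).2.1 + 1 by omega)
              (show (s b).2.2 = (s a).2.2 by omega))
        have := hinj b x (by omega) hbn hx1 hx2 he
        omega
    rcases eq_or_lt_of_le hxb with hxeq | hxlt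
    · -- `x = b`: `b` lies directly below `a` in `s`
      have hsb1 : (s b).1 = (s a).1 := by rw [← hxeq]; omega
      have hsb2 : (s b).2.1 = (s a).2.1 + 1 := by rw [← hxeq]; omega
      have hsb3 : (s b).2.2 = (s a).2.2 := by rw [← hxeq]; omega
      by_cases hne : (∃ q, a < q ∧ q < b ∧
          ((s q).1 < (s a).1 ∨ ((s q).1 = (s a).1 ∧ (s q).2.1 ≤ (s a).2.1)))
      · -- there is a "high" intermediate entry; cycle the window `[h, b]` and recurse.
        have hset : ((Finset.Ioo a b).filter (fun q =>
            (s q).1 < (s a).1 ∨ ((s q).1 = (s a).1 ∧ (s q).2.1 ≤ (s a).2.1))).Nonempty := by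
          obtain ⟨q, hq1, hq2, hq3⟩ := hne
          exact ⟨q, Finset.mem_filter.2 ⟨Finset.mem_Ioo.2 ⟨hq1, hq2⟩, hq3⟩⟩
        set h := ((Finset.Ioo a b).filter (fun q =>
            (s q).1 < (s a).1 ∨ ((s q).1 = (s a).1 ∧ (s q).2.1 ≤ (s a).2.1))).max' hset
          with hhdef
        have hhmem := Finset.max'_mem _ hset
        rw [← hhdef, Finset.mem_filter, Finset.mem_Ioo] at hhmem
        obtain ⟨⟨hha, hhb⟩, hhHigh⟩ := hhmem
        have hmax : ∀ q, a < q → q < b →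
            ((s q).1 < (s a).1 ∨ ((s q).1 = (s a).1 ∧ (s q).2.1 ≤ (s a).2.1)) → q ≤ h := by
          intro q hq1 hq2 hq3
          exact Finset.le_max' _ q
            (Finset.mem_filter.2 ⟨Finset.mem_Ioo.2 ⟨hq1, hq2⟩, hq3⟩)
        have hLow : ∀ q, h < q → q ≤ b →
            (s a).1 < (s q).1 ∨ ((s q).1 = (s a).1 ∧ (s a).2.1 < (s q).2.1) := by
          intro q hq1 hq2
          rcases eq_or_lt_of_le hq2 with rfl | hq2'
          · right
            exact ⟨hsb1, by omega⟩
          · by_contra hcon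
            have hHq : (s q).1 < (s a).1 ∨ ((s q).1 = (s a).1 ∧ (s q).2.1 ≤ (s a).2.1) := by
              omega
            have := hmax q (by omega) hq2' hHq
            omega
        have hhb' : h < b := hhb
        obtain ⟨hstd1, hdsp1, hlen1⟩ :=
          move_lemma hl htl hs hds ha hab hbn hsb1 hsb2 hsb3
            (h := h) (m := b) (by omega) hhb' le_rfl (by omega) hhHigh hLow
        have e1 : (cycP h b hhb'.le) a = a := by
          rw [cycP_apply]; split_ifs <;> omega
        have e2 : (cycP h b hhb'.le) (b - 1) = b := by
          rw [cycP_apply]; split_ifs <;> omega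
        have hcol₁ : (actTab s (cycP h b hhb'.le) a).1
              = (actTab s (cycP h b hhb'.le) (b - 1)).1 ∧
            (actTab s (cycP h b hhb'.le) a).2.2
              = (actTab s (cycP h b hhb'.le) (b - 1)).2.2 := by
          show (s ((cycP h b hhb'.le) a)).1 = (s ((cycP h b hhb'.le) (b - 1))).1 ∧
            (s ((cycP h b hhb'.le) a)).2.2 = (s ((cycP h b hhb'.le) (b - 1))).2.2
          rw [e1, e2]
          exact ⟨hsb1.symm, hsb3.symm⟩
        obtain ⟨w₂, c, p1, p2, p3, p4, p5, p6, p7⟩ :=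
          IH (b - 1) (actTab s (cycP h b hhb'.le)) (ds * cycP h b hhb'.le) hstd1 hdsp1
            (by omega) (by omega)
            (row_interval htm ha hbn hrow (by omega) (by omega)) hcol₁ (by omega)
        have hfixw : FixesOutside (cycP h b hhb'.le * w₂) a b := by
          intro k hk
          have h2 : w₂ k = k := p1 k (by omega)
          have h1 : (cycP h b hhb'.le) k = k := cycP_fixes h b hhb'.le k (by omega)
          show (cycP h b hhb'.le) (w₂ k) = k
          rw [h2, h1]
        refine ⟨cycP h b hhb'.le * w₂, c, hfixw, p2, by omega, p4, ?_, p6, p7⟩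
        -- length additivity for the product
        have t1 : permLength n (ds * (cycP h b hhb'.le * w₂))
            ≤ permLength n ds + permLength n (cycP h b hhb'.le * w₂) :=
          permLength_mul_le n ds _ (fixes_range hfixw ha hbn)
        have t2 : permLength n (cycP h b hhb'.le * w₂)
            ≤ permLength n (cycP h b hhb'.le) + permLength n w₂ :=
          permLength_mul_le n _ w₂ (fixes_range p1 ha (by omega))
        have t3 : ds * (cycP h b hhb'.le * w₂) = ds * cycP h b hhb'.le * w₂ :=
          (mul_assoc ds _ w₂).symm
        rw [t3] at t1 ⊢
        omega
      · -- all intermediate entries are "low": one cycle on `[a, b-1]` finishes.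
        have hallLow : ∀ q, a < q → q ≤ b - 1 →
            (s a).1 < (s q).1 ∨ ((s q).1 = (s a).1 ∧ (s a).2.1 < (s q).2.1) := by
          intro q hq1 hq2
          by_contra hcon
          exact hne ⟨q, hq1, by omega, by omega⟩
        have hab' : a < b - 1 := by omega
        obtain ⟨hstd1, hdsp1, hlen1⟩ :=
          move_lemma hl htl hs hds ha hab hbn hsb1 hsb2 hsb3
            (h := a) (m := b - 1) le_rfl hab' (by omega) (fun _ => by omega)
            (Or.inr ⟨rfl, le_rfl⟩) hallLow
        have e1 : (cycP a (b - 1) hab'.le) (b - 1) = a := by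
          rw [cycP_apply]; split_ifs <;> omega
        have e2 : (cycP a (b - 1) hab'.le) b = b := by
          rw [cycP_apply]; split_ifs <;> omega
        have hb' : b - 1 + 1 = b := by omega
        refine ⟨cycP a (b - 1) hab'.le, b - 1, ?_, by omega, by omega, hstd1, hlen1, ?_, ?_⟩
        · intro k hk
          exact cycP_fixes a (b - 1) hab'.le k (by omega)
        · rw [hb']
          have hint := row_interval htm ha hbn hrow (show a ≤ b - 1 by omega)
            (show b - 1 ≤ b by omega)
          exact ⟨by omega, by omega⟩
        · rw [hb']
          constructor
          · show (s ((cycP a (b - 1) hab'.le) (b - 1))).1 = (s ((cycP a (b - 1) hab'.le) b)).1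
            rw [e1, e2]
            omega
          · show (s ((cycP a (b - 1) hab'.le) (b - 1))).2.2
              = (s ((cycP a (b - 1) hab'.le) b)).2.2
            rw [e1, e2]
            omega
    · -- `x < b`: recurse on the pair `(a, x)`.
      obtain ⟨w, c, p1, p2, p3, p4, p5, p6, p7⟩ :=
        IH x s ds hs hds hax hx2
          (row_interval htm ha hbn hrow (by omega) (by omega))
          ⟨by omega, by omega⟩ (by omega)
      exact ⟨w, c, fun k hk => p1 k (by omega), p2, by omega, p4, p5, p6, p7⟩

end MainAux


/-- Lemma 2.2.  If `a < b` are in the same row of `t^μ` and the same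
column of the standard `λ`-tableau `s`, then there are `w ∈ S_{{a,…,b}}` and `a ≤ c < b`
with `sw` standard, `ℓ(d(s)w) = ℓ(d(s)) + ℓ(w)`, and `c, c+1` in the same row of `t^μ`
and the same column of `sw`. -/
theorem statement3 {ℓ n : ℕ} (lam mu : Multicomp ℓ n)
    (hl : lam.IsMultipartition) (hm : mu.IsMultipartition)
    (s tl tm : ℕ → Node) (hs : StandardTab lam s)
    (htl : IsRowReading lam tl) (htm : IsRowReading mu tm)
    (ds : Equiv.Perm ℕ) (hds : IsDPerm n tl s ds)
    (a b : ℕ) (ha : 1 ≤ a) (hab : a < b) (hb : b ≤ n)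
    (hrow : (tm a).1 = (tm b).1 ∧ (tm a).2.1 = (tm b).2.1)
    (hcol : (s a).1 = (s b).1 ∧ (s a).2.2 = (s b).2.2) :
    ∃ (w : Equiv.Perm ℕ) (c : ℕ), FixesOutside w a b ∧ a ≤ c ∧ c < b ∧
      StandardTab lam (actTab s w) ∧
      permLength n (ds * w) = permLength n ds + permLength n w ∧
      ((tm c).1 = (tm (c + 1)).1 ∧ (tm c).2.1 = (tm (c + 1)).2.1) ∧
      ((actTab s w c).1 = (actTab s w (c + 1)).1 ∧
        (actTab s w c).2.2 = (actTab s w (c + 1)).2.2) := by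
  obtain ⟨w, c, p1, p2, p3, p4, p5, p6, p7⟩ :=
    aux_main lam mu hl tl tm htl htm a ha (b - a) b s ds hs hds hab hb hrow hcol le_rfl
  exact ⟨w, c, p1, p2, p3, p4, p5, p6, p7⟩

end SpechtInduction
end
end

section
/- (Murphy's lemma) Suppose v̂ is a row standard μ-tableau, s is a standard μ-tableau, and u, w ∈ S_n satisfy: u ≤ w in Bruhat order, v̂ ⊵ s, v̂u is row standard, s ⊳ sw, and ℓ(d(s)w) = ℓ(d(s)) + ℓ(w). Then v̂u ⊵ sw. -/
open scoped Classical

noncomputable section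

namespace SpechtInduction

/-! ### Auxiliary lemmas for Statement 5 -/

/-- The "before" predicate used in dominance partial sums. -/
def Bnd (x : Node) (l r : ℕ) : Prop := x.1 < l ∨ (x.1 = l ∧ x.2.1 < r)

lemma sum_card_filter_eq (s : Finset ℕ) (f : ℕ → ℕ) (l : ℕ) :
    ∑ k ∈ Finset.range l, (s.filter fun a => f a = k).card
      = (s.filter fun a => f a < l).card := by
  induction l with
  | zero => simp
  | succ l ih =>
    rw [Finset.sum_range_succ, ih]
    have h : (s.filter fun a => f a < l + 1)
        = (s.filter fun a => f a < l) ∪ (s.filter fun a => f a = l) := by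
      rw [← Finset.filter_or]
      apply Finset.filter_congr
      intro x _
      constructor <;> intro h <;> omega
    rw [h, Finset.card_union_of_disjoint]
    rw [Finset.disjoint_filter]
    intro x _ h1 h2
    omega

lemma tabPsum_eq_card (pos : ℕ → Node) (m l r : ℕ) :
    tabPsum pos m l r = ((Finset.Icc 1 m).filter fun k => Bnd (pos k) l r).card := by
  unfold tabPsum compcnt cnt
  have h1 : ∑ k ∈ Finset.range l,
      ((Finset.Icc 1 m).filter fun a => (pos a).1 = k).card
      = ((Finset.Icc 1 m).filter fun a => (pos a).1 < l).card :=
    sum_card_filter_eq _ (fun a => (pos a).1) l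
  have h2 : ∑ j ∈ Finset.range r,
      ((Finset.Icc 1 m).filter fun a => (pos a).1 = l ∧ (pos a).2.1 = j).card
      = ((Finset.Icc 1 m).filter fun a => (pos a).1 = l ∧ (pos a).2.1 < r).card := by
    have key := sum_card_filter_eq ((Finset.Icc 1 m).filter fun a => (pos a).1 = l)
      (fun a => (pos a).2.1) r
    rw [Finset.filter_filter] at key
    calc ∑ j ∈ Finset.range r,
          ((Finset.Icc 1 m).filter fun a => (pos a).1 = l ∧ (pos a).2.1 = j).card
        = ∑ j ∈ Finset.range r,
          ((((Finset.Icc 1 m).filter fun a => (pos a).1 = l).filter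
            fun a => (pos a).2.1 = j)).card := by
          apply Finset.sum_congr rfl
          intro j _
          rw [Finset.filter_filter]
      _ = ((Finset.Icc 1 m).filter fun a => (pos a).1 = l ∧ (pos a).2.1 < r).card := key
  rw [h1, h2]
  rw [← Finset.card_union_of_disjoint, ← Finset.filter_or]
  · apply congrArg
    apply Finset.filter_congr
    intro x _
    simp [Bnd]
  · rw [Finset.disjoint_filter]
    intro x _ hx hx'
    omega

lemma tabPsum_zero (pos : ℕ → Node) (l r : ℕ) : tabPsum pos 0 l r = 0 := by
  rw [tabPsum_eq_card]
  have : Finset.Icc 1 0 = (∅ : Finset ℕ) := by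
    apply Finset.Icc_eq_empty
    omega
  rw [this]
  simp

lemma tabPsum_succ (pos : ℕ → Node) (a l r : ℕ) :
    tabPsum pos (a + 1) l r
      = tabPsum pos a l r + (if Bnd (pos (a + 1)) l r then 1 else 0) := by
  rw [tabPsum_eq_card, tabPsum_eq_card]
  have h : Finset.Icc 1 (a + 1) = insert (a + 1) (Finset.Icc 1 a) := by
    ext x
    simp only [Finset.mem_Icc, Finset.mem_insert]
    omega
  rw [h, Finset.filter_insert]
  have hnot : (a + 1) ∉ Finset.Icc 1 a := by
    simp only [Finset.mem_Icc]
    omega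
  split_ifs with hb
  · rw [Finset.card_insert_of_notMem (fun hmem => hnot (Finset.mem_of_mem_filter _ hmem))]
  · omega

lemma tabPsum_act (pos : ℕ → Node) (σ : Equiv.Perm ℕ) (m l r : ℕ)
    (h1 : ∀ k ∈ Finset.Icc 1 m, σ k ∈ Finset.Icc 1 m)
    (h2 : ∀ k ∈ Finset.Icc 1 m, σ⁻¹ k ∈ Finset.Icc 1 m) :
    tabPsum (actTab pos σ) m l r = tabPsum pos m l r := by
  rw [tabPsum_eq_card, tabPsum_eq_card]
  apply Finset.card_bij' (fun k _ => σ k) (fun k _ => σ⁻¹ k)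
  · intro a ha
    rw [Finset.mem_filter] at ha ⊢
    exact ⟨h1 a ha.1, ha.2⟩
  · intro a ha
    rw [Finset.mem_filter] at ha ⊢
    refine ⟨h2 a ha.1, ?_⟩
    show Bnd (pos (σ (σ⁻¹ a))) l r
    rw [show σ (σ⁻¹ a) = a from σ.apply_symm_apply a]
    exact ha.2
  · intro a _
    exact σ.symm_apply_apply a
  · intro a _
    exact σ.apply_symm_apply a

lemma swapP_apply (c k : ℕ) :
    swapP c k = if k = c then c + 1 else if k = c + 1 then c else k := by
  simp [swapP, Equiv.swap_apply_def]

lemma swapP_swapP (c k : ℕ) : swapP c (swapP c k) = k := Equiv.swap_apply_self c (c + 1) k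

lemma swapP_inv (c : ℕ) : (swapP c)⁻¹ = swapP c := Equiv.swap_inv c (c + 1)

lemma tabPsum_act_swap_of_ne (pos : ℕ → Node) {c m : ℕ} (hc : 1 ≤ c) (hm : m ≠ c)
    (l r : ℕ) :
    tabPsum (actTab pos (swapP c)) m l r = tabPsum pos m l r := by
  have hmap : ∀ k ∈ Finset.Icc 1 m, swapP c k ∈ Finset.Icc 1 m := by
    intro k hk
    rw [Finset.mem_Icc] at hk ⊢
    rw [swapP_apply]
    split_ifs <;> omega
  apply tabPsum_act
  · exact hmap
  · rw [swapP_inv]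
    exact hmap

lemma tabPsum_act_swap (pos : ℕ → Node) {c : ℕ} (hc : 1 ≤ c) (l r : ℕ) :
    tabPsum (actTab pos (swapP c)) c l r
      = tabPsum pos (c - 1) l r + (if Bnd (pos (c + 1)) l r then 1 else 0) := by
  obtain ⟨j, rfl⟩ : ∃ j, c = j + 1 := ⟨c - 1, by omega⟩
  rw [tabPsum_succ]
  have he : actTab pos (swapP (j + 1)) (j + 1) = pos (j + 1 + 1) := by
    show pos (swapP (j + 1) (j + 1)) = pos (j + 1 + 1)
    rw [swapP_apply]
    simp
  rw [he]
  have hfix : tabPsum (actTab pos (swapP (j + 1))) j l r = tabPsum pos j l r := by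
    have hmap : ∀ k ∈ Finset.Icc 1 j, swapP (j + 1) k ∈ Finset.Icc 1 j := by
      intro k hk
      rw [Finset.mem_Icc] at hk ⊢
      rw [swapP_apply]
      split_ifs <;> omega
    apply tabPsum_act
    · exact hmap
    · rw [swapP_inv]
      exact hmap
  rw [hfix]
  simp

/-! ### Length lemmas -/

lemma swapP_mem_Icc {n c k : ℕ} (hc : 1 ≤ c) (hcn : c < n) (hk : k ∈ Finset.Icc 1 n) :
    swapP c k ∈ Finset.Icc 1 n := by
  rw [Finset.mem_Icc] at hk ⊢
  rw [swapP_apply]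
  split_ifs <;> omega

lemma swapP_lt {c a b : ℕ} (hab : a < b) (hne : ¬(a = c ∧ b = c + 1)) :
    swapP c a < swapP c b := by
  rw [swapP_apply, swapP_apply]
  split_ifs <;> omega

lemma inv_erase_card (n : ℕ) (σ : Equiv.Perm ℕ) {c : ℕ} (hc : 1 ≤ c) (hcn : c < n) :
    (((((Finset.Icc 1 n) ×ˢ (Finset.Icc 1 n)).filter
        fun p => p.1 < p.2 ∧ (σ * swapP c) p.2 < (σ * swapP c) p.1).erase (c, c + 1)).card)
      = (((((Finset.Icc 1 n) ×ˢ (Finset.Icc 1 n)).filter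
        fun p => p.1 < p.2 ∧ σ p.2 < σ p.1).erase (c, c + 1)).card) := by
  have hkey : ∀ (τ : Equiv.Perm ℕ) p,
      p ∈ ((((Finset.Icc 1 n) ×ˢ (Finset.Icc 1 n)).filter
        fun p => p.1 < p.2 ∧ τ (swapP c p.2) < τ (swapP c p.1)).erase (c, c + 1)) →
      (swapP c p.1, swapP c p.2) ∈ ((((Finset.Icc 1 n) ×ˢ (Finset.Icc 1 n)).filter
        fun p => p.1 < p.2 ∧ τ p.2 < τ p.1).erase (c, c + 1)) := by
    intro τ p hp
    rw [Finset.mem_erase, Finset.mem_filter, Finset.mem_product] at hp ⊢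
    obtain ⟨hne, ⟨hp1, hp2⟩, hlt, hinv⟩ := hp
    have hne' : ¬(p.1 = c ∧ p.2 = c + 1) := by
      intro ⟨h1, h2⟩
      exact hne (Prod.ext h1 h2)
    refine ⟨?_, ⟨swapP_mem_Icc hc hcn hp1, swapP_mem_Icc hc hcn hp2⟩,
      swapP_lt hlt hne', hinv⟩
    intro h
    have h1 : swapP c p.1 = c := congrArg Prod.fst h
    have h2 : swapP c p.2 = c + 1 := congrArg Prod.snd h
    have e1 : p.1 = c + 1 := by
      have := congrArg (swapP c) h1
      rw [swapP_swapP, swapP_apply] at this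
      simp at this
      omega
    have e2 : p.2 = c := by
      have := congrArg (swapP c) h2
      rw [swapP_swapP, swapP_apply] at this
      split_ifs at this <;> omega
    omega
  apply Finset.card_bij' (fun p _ => (swapP c p.1, swapP c p.2))
    (fun p _ => (swapP c p.1, swapP c p.2))
  · intro p hp
    apply hkey σ
    convert hp using 3
    exact Iff.rfl
  · intro p hp
    rw [Finset.mem_erase, Finset.mem_filter, Finset.mem_product] at hp ⊢
    obtain ⟨hne, ⟨hp1, hp2⟩, hlt, hinv⟩ := hp
    have hne' : ¬(p.1 = c ∧ p.2 = c + 1) := by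
      intro ⟨h1, h2⟩
      exact hne (Prod.ext h1 h2)
    refine ⟨?_, ⟨swapP_mem_Icc hc hcn hp1, swapP_mem_Icc hc hcn hp2⟩,
      swapP_lt hlt hne', ?_⟩
    · intro h
      have h1 : swapP c p.1 = c := congrArg Prod.fst h
      have h2 : swapP c p.2 = c + 1 := congrArg Prod.snd h
      have e1 : p.1 = c + 1 := by
        have := congrArg (swapP c) h1
        rw [swapP_swapP, swapP_apply] at this
        simp at this
        omega
      have e2 : p.2 = c := by
        have := congrArg (swapP c) h2
        rw [swapP_swapP, swapP_apply] at this
        split_ifs at this <;> omega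
      omega
    · show (σ * swapP c) (swapP c p.2) < (σ * swapP c) (swapP c p.1)
      show σ (swapP c (swapP c p.2)) < σ (swapP c (swapP c p.1))
      rw [swapP_swapP, swapP_swapP]
      exact hinv
  · intro p _
    simp [swapP_swapP]
  · intro p _
    simp [swapP_swapP]

lemma mem_inv_pair {n : ℕ} (σ : Equiv.Perm ℕ) {c : ℕ} (hc : 1 ≤ c) (hcn : c < n) :
    ((c, c + 1) ∈ (((Finset.Icc 1 n) ×ˢ (Finset.Icc 1 n)).filter
      fun p => p.1 < p.2 ∧ σ p.2 < σ p.1)) ↔ σ (c + 1) < σ c := by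
  rw [Finset.mem_filter, Finset.mem_product, Finset.mem_Icc, Finset.mem_Icc]
  constructor
  · intro h
    exact h.2.2
  · intro h
    exact ⟨⟨⟨by omega, by omega⟩, by omega, by omega⟩, by omega, h⟩

lemma permLength_mul_swapP_lt {n : ℕ} (σ : Equiv.Perm ℕ) {c : ℕ} (hc : 1 ≤ c)
    (hcn : c < n) (h : σ c < σ (c + 1)) :
    permLength n (σ * swapP c) = permLength n σ + 1 := by
  unfold permLength
  have hmem : ((c, c + 1) ∈ (((Finset.Icc 1 n) ×ˢ (Finset.Icc 1 n)).filter
      fun p => p.1 < p.2 ∧ (σ * swapP c) p.2 < (σ * swapP c) p.1)) := by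
    rw [mem_inv_pair (σ * swapP c) hc hcn]
    show σ (swapP c (c + 1)) < σ (swapP c c)
    rw [swapP_apply, swapP_apply]
    simpa using h
  have hnot : ¬ ((c, c + 1) ∈ (((Finset.Icc 1 n) ×ˢ (Finset.Icc 1 n)).filter
      fun p => p.1 < p.2 ∧ σ p.2 < σ p.1)) := by
    rw [mem_inv_pair σ hc hcn]
    omega
  rw [← Finset.card_erase_add_one hmem, inv_erase_card n σ hc hcn,
    Finset.erase_eq_of_notMem hnot]

lemma permLength_mul_swapP_gt {n : ℕ} (σ : Equiv.Perm ℕ) {c : ℕ} (hc : 1 ≤ c)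
    (hcn : c < n) (h : σ (c + 1) < σ c) :
    permLength n σ = permLength n (σ * swapP c) + 1 := by
  unfold permLength
  have hmem : ((c, c + 1) ∈ (((Finset.Icc 1 n) ×ˢ (Finset.Icc 1 n)).filter
      fun p => p.1 < p.2 ∧ σ p.2 < σ p.1)) := (mem_inv_pair σ hc hcn).mpr h
  have hnot : ¬ ((c, c + 1) ∈ (((Finset.Icc 1 n) ×ˢ (Finset.Icc 1 n)).filter
      fun p => p.1 < p.2 ∧ (σ * swapP c) p.2 < (σ * swapP c) p.1)) := by
    rw [mem_inv_pair (σ * swapP c) hc hcn]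
    show ¬ σ (swapP c (c + 1)) < σ (swapP c c)
    rw [swapP_apply, swapP_apply]
    simp only [if_pos rfl]
    split_ifs <;> omega
  rw [← Finset.card_erase_add_one hmem, ← inv_erase_card n σ hc hcn,
    Finset.erase_eq_of_notMem hnot]

lemma swapP_ne_apply {c : ℕ} (σ : Equiv.Perm ℕ) : σ c ≠ σ (c + 1) := by
  intro h
  have := σ.injective h
  omega

lemma permLength_mul_swapP_le {n : ℕ} (σ : Equiv.Perm ℕ) {c : ℕ} (hc : 1 ≤ c)
    (hcn : c < n) : permLength n (σ * swapP c) ≤ permLength n σ + 1 := by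
  rcases lt_trichotomy (σ c) (σ (c + 1)) with h | h | h
  · rw [permLength_mul_swapP_lt σ hc hcn h]
  · exact absurd h (swapP_ne_apply σ)
  · have := permLength_mul_swapP_gt σ hc hcn h
    omega

lemma lt_of_permLength_succ {n : ℕ} (σ : Equiv.Perm ℕ) {c : ℕ} (hc : 1 ≤ c)
    (hcn : c < n) (h : permLength n (σ * swapP c) = permLength n σ + 1) :
    σ c < σ (c + 1) := by
  rcases lt_trichotomy (σ c) (σ (c + 1)) with h' | h' | h'
  · exact h'
  · exact absurd h' (swapP_ne_apply σ)
  · have := permLength_mul_swapP_gt σ hc hcn h'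
    omega

/-! ### Word lemmas -/

lemma wordProd_nil : wordProd [] = 1 := rfl

lemma wordProd_cons (c : ℕ) (L : List ℕ) : wordProd (c :: L) = swapP c * wordProd L := by
  simp [wordProd]

lemma wordProd_append (L M : List ℕ) : wordProd (L ++ M) = wordProd L * wordProd M := by
  simp [wordProd]

lemma wordProd_singleton (c : ℕ) : wordProd [c] = swapP c := by
  simp [wordProd]

lemma permLength_mul_wordProd_le {n : ℕ} (L : List ℕ) (hL : ∀ c ∈ L, 1 ≤ c ∧ c < n)
    (x : Equiv.Perm ℕ) : permLength n (x * wordProd L) ≤ permLength n x + L.length := by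
  induction L generalizing x with
  | nil =>
    simp [wordProd_nil]
  | cons c L ih =>
    rw [wordProd_cons, ← mul_assoc]
    have hc := hL c List.mem_cons_self
    have h1 := permLength_mul_swapP_le (n := n) x hc.1 hc.2
    have h2 := ih (fun d hd => hL d (List.mem_cons_of_mem _ hd)) (x * swapP c)
    simp only [List.length_cons]
    omega

lemma fixesOutside_mul {x y : Equiv.Perm ℕ} {a b : ℕ} (hx : FixesOutside x a b)
    (hy : FixesOutside y a b) : FixesOutside (x * y) a b := by
  intro k hk
  show x (y k) = k
  rw [hy k hk, hx k hk]

lemma fixesOutside_one {a b : ℕ} : FixesOutside 1 a b := fun k _ => rfl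

lemma fixesOutside_swapP {n c : ℕ} (hc : 1 ≤ c) (hcn : c < n) :
    FixesOutside (swapP c) 1 n := by
  intro k hk
  rw [swapP_apply]
  split_ifs <;> omega

lemma fixesOutside_wordProd {n : ℕ} (L : List ℕ) (hL : ∀ c ∈ L, 1 ≤ c ∧ c < n) :
    FixesOutside (wordProd L) 1 n := by
  induction L with
  | nil => exact fixesOutside_one
  | cons c L ih =>
    rw [wordProd_cons]
    have hc := hL c List.mem_cons_self
    exact fixesOutside_mul (fixesOutside_swapP hc.1 hc.2)
      (ih (fun d hd => hL d (List.mem_cons_of_mem _ hd)))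

lemma mem_of_fixesOutside {n : ℕ} {σ : Equiv.Perm ℕ} (h : FixesOutside σ 1 n) {k : ℕ}
    (h1 : 1 ≤ k) (h2 : k ≤ n) : 1 ≤ σ k ∧ σ k ≤ n := by
  by_contra hcon
  have hout : σ k < 1 ∨ n < σ k := by omega
  have hfix : σ (σ k) = σ k := h (σ k) hout
  have := σ.injective hfix
  omega

/-! ### Key dominance step lemmas -/

lemma bnd_mono {x y : Node} (h : nodeLex x y) {l r : ℕ} (hb : Bnd y l r) : Bnd x l r := by
  obtain ⟨x1, x2, x3⟩ := x
  obtain ⟨y1, y2, y3⟩ := y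
  simp only [nodeLex, Bnd] at *
  omega

lemma key_right {n : ℕ} (T S : ℕ → Node) {c : ℕ} (hc : 1 ≤ c) (hcn : c + 1 ≤ n)
    (h1 : ∀ m l r, m ≤ n → tabPsum S m l r ≤ tabPsum T m l r)
    (h2 : ∀ l r, Bnd (S (c + 1)) l r → Bnd (S c) l r) :
    ∀ m l r, m ≤ n → tabPsum (actTab S (swapP c)) m l r ≤ tabPsum T m l r := by
  intro m l r hm
  rcases eq_or_ne m c with rfl | hne
  · rw [tabPsum_act_swap S hc]
    obtain ⟨j, rfl⟩ : ∃ j, m = j + 1 := ⟨m - 1, by omega⟩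
    simp only [Nat.add_sub_cancel]
    have e1 := tabPsum_succ S j l r
    have hS := h1 (j + 1) l r hm
    split_ifs with hb
    · have hbc := h2 l r hb
      rw [e1, if_pos hbc] at hS
      omega
    · rw [e1] at hS
      split_ifs at hS <;> omega
  · rw [tabPsum_act_swap_of_ne S hc hne]
    exact h1 m l r hm

lemma key_both {n : ℕ} (T S : ℕ → Node) {c : ℕ} (hc : 1 ≤ c) (hcn : c + 1 ≤ n)
    (h1 : ∀ m l r, m ≤ n → tabPsum S m l r ≤ tabPsum T m l r)
    (h2 : ∀ l r, Bnd (S (c + 1)) l r → Bnd (S c) l r) :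
    ∀ m l r, m ≤ n →
      tabPsum (actTab S (swapP c)) m l r ≤ tabPsum (actTab T (swapP c)) m l r := by
  intro m l r hm
  rcases eq_or_ne m c with rfl | hne
  · rw [tabPsum_act_swap S hc, tabPsum_act_swap T hc]
    obtain ⟨j, rfl⟩ : ∃ j, m = j + 1 := ⟨m - 1, by omega⟩
    simp only [Nat.add_sub_cancel]
    have hj : j ≤ n := by omega
    have hAS := h1 j l r hj
    by_cases hbS : Bnd (S (j + 1 + 1)) l r
    · by_cases hbT : Bnd (T (j + 1 + 1)) l r
      · rw [if_pos hbS, if_pos hbT]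
        omega
      · rw [if_pos hbS, if_neg hbT]
        have hbS1 : Bnd (S (j + 1)) l r := h2 l r hbS
        have hS2 := h1 (j + 2) l r (by omega)
        have eS1 : tabPsum S (j + 1) l r = tabPsum S j l r + 1 := by
          rw [tabPsum_succ, if_pos hbS1]
        have eS2 : tabPsum S (j + 2) l r = tabPsum S (j + 1) l r + 1 := by
          rw [tabPsum_succ S (j + 1), if_pos hbS]
        have eT2 : tabPsum T (j + 2) l r = tabPsum T (j + 1) l r := by
          rw [tabPsum_succ T (j + 1), if_neg hbT]
          omega
        have eT1 := tabPsum_succ T j l r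
        split_ifs at eT1 <;> omega
    · rw [if_neg hbS]
      split_ifs <;> omega
  · rw [tabPsum_act_swap_of_ne S hc hne, tabPsum_act_swap_of_ne T hc hne]
    exact h1 m l r hm

/-! ### Main induction -/

lemma main_aux {ℓ n : ℕ} (mu : Multicomp ℓ n) (tm vh s : ℕ → Node)
    (htm : IsRowReading mu tm) (ds : Equiv.Perm ℕ) (hds : IsDPerm n tm s ds)
    (hdom : TabDominates n vh s) :
    ∀ ww uw : List ℕ, uw.Sublist ww → (∀ c ∈ ww, 1 ≤ c ∧ c < n) →
      permLength n (ds * wordProd ww) = permLength n ds + ww.length →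
      ∀ m l r, m ≤ n →
        tabPsum (actTab s (wordProd ww)) m l r
          ≤ tabPsum (actTab vh (wordProd uw)) m l r := by
  intro ww
  induction ww using List.reverseRecOn with
  | nil =>
    intro uw hsub _ _ m l r hm
    have huw : uw = [] := List.sublist_nil.mp hsub
    subst huw
    have hact : ∀ p : ℕ → Node, actTab p (wordProd []) = p := by
      intro p
      funext k
      show p ((1 : Equiv.Perm ℕ) k) = p k
      rw [Equiv.Perm.one_apply]
    rw [hact, hact]
    rcases Nat.eq_zero_or_pos m with rfl | hpos
    · rw [tabPsum_zero, tabPsum_zero]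
    · exact hdom m l r hpos hm
  | append_singleton ww' c ih =>
    intro uw hsub hletters hlen
    have hc : 1 ≤ c ∧ c < n := hletters c (by simp)
    have hlet' : ∀ d ∈ ww', 1 ≤ d ∧ d < n := fun d hd => hletters d (by simp [hd])
    have hwp : wordProd (ww' ++ [c]) = wordProd ww' * swapP c := by
      rw [wordProd_append, wordProd_singleton]
    -- length bookkeeping
    have hsub1 : permLength n (ds * wordProd ww') ≤ permLength n ds + ww'.length :=
      permLength_mul_wordProd_le ww' hlet' ds
    have hswple : permLength n (ds * wordProd ww' * swapP c)
        ≤ permLength n (ds * wordProd ww') + 1 :=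
      permLength_mul_swapP_le _ hc.1 hc.2
    have htot : permLength n (ds * wordProd ww' * swapP c)
        = permLength n ds + ww'.length + 1 := by
      have h := hlen
      rw [hwp, ← mul_assoc] at h
      simpa [add_assoc] using h
    have hlen' : permLength n (ds * wordProd ww') = permLength n ds + ww'.length := by
      omega
    have hstep : permLength n (ds * wordProd ww' * swapP c)
        = permLength n (ds * wordProd ww') + 1 := by omega
    have hlt : (ds * wordProd ww') c < (ds * wordProd ww') (c + 1) :=
      lt_of_permLength_succ _ hc.1 hc.2 hstep
    -- fixes
    have hfix' : FixesOutside (wordProd ww') 1 n := fixesOutside_wordProd ww' hlet'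
    have hfixd : FixesOutside (ds * wordProd ww') 1 n := fixesOutside_mul hds.1 hfix'
    -- the S-side nodeLex fact
    have hSc : actTab s (wordProd ww') c = tm ((ds * wordProd ww') c) := by
      have hmem := mem_of_fixesOutside hfix' hc.1 (le_of_lt hc.2)
      exact hds.2 _ hmem.1 hmem.2
    have hSc1 : actTab s (wordProd ww') (c + 1) = tm ((ds * wordProd ww') (c + 1)) := by
      have hmem := mem_of_fixesOutside hfix' (by omega : 1 ≤ c + 1) (by omega : c + 1 ≤ n)
      exact hds.2 _ hmem.1 hmem.2
    have hnl : nodeLex (actTab s (wordProd ww') c) (actTab s (wordProd ww') (c + 1)) := by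
      rw [hSc, hSc1]
      have hb1 := mem_of_fixesOutside hfixd hc.1 (le_of_lt hc.2)
      have hb2 := mem_of_fixesOutside hfixd (by omega : 1 ≤ c + 1) (by omega : c + 1 ≤ n)
      exact (htm.2 _ _ hb1.1 hb1.2 hb2.1 hb2.2).mp hlt
    have h2 : ∀ l r, Bnd (actTab s (wordProd ww') (c + 1)) l r →
        Bnd (actTab s (wordProd ww') c) l r := fun l r hb => bnd_mono hnl hb
    -- split on the subword
    obtain ⟨u1, u2, rfl, hu1, hu2⟩ := List.sublist_append_iff.mp hsub
    have hgoal : ∀ m l r, m ≤ n →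
        tabPsum (actTab (actTab s (wordProd ww')) (swapP c)) m l r
          ≤ tabPsum (actTab vh (wordProd (u1 ++ u2))) m l r := by
      have hIH := ih u1 hu1 hlet' hlen'
      rcases List.sublist_singleton.mp hu2 with rfl | rfl
      · intro m l r hm
        rw [List.append_nil]
        exact key_right (actTab vh (wordProd u1)) (actTab s (wordProd ww')) hc.1
          hc.2 hIH h2 m l r hm
      · intro m l r hm
        have heq : actTab vh (wordProd (u1 ++ [c]))
            = actTab (actTab vh (wordProd u1)) (swapP c) := by
          rw [wordProd_append, wordProd_singleton]
          rfl
        rw [heq]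
        exact key_both (actTab vh (wordProd u1)) (actTab s (wordProd ww')) hc.1
          hc.2 hIH h2 m l r hm
    intro m l r hm
    have heqS : actTab s (wordProd (ww' ++ [c]))
        = actTab (actTab s (wordProd ww')) (swapP c) := by
      rw [hwp]
      rfl
    rw [heqS]
    exact hgoal m l r hm

/-- Murphy's lemma.  If `v̂` is row standard, `s` is standard,
`u ≤ w` in Bruhat order, `v̂ ⊵ s`, `v̂u` is row standard, `s ⊳ sw` and
`ℓ(d(s)w) = ℓ(d(s)) + ℓ(w)`, then `v̂u ⊵ sw`. -/
theorem statement5 {ℓ n : ℕ} (mu : Multicomp ℓ n) (hm : mu.IsMultipartition)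
    (tm vh s : ℕ → Node) (htm : IsRowReading mu tm)
    (hvh : RowStandard mu vh) (hs : StandardTab mu s)
    (ds : Equiv.Perm ℕ) (hds : IsDPerm n tm s ds)
    (u w : Equiv.Perm ℕ) (hu : FixesOutside u 1 n) (hw : FixesOutside w 1 n)
    (hbr : BruhatLE n u w)
    (hdom : TabDominates n vh s)
    (hvu : RowStandard mu (actTab vh u))
    (hsw1 : TabDominates n s (actTab s w))
    (hsw2 : ∃ k, 1 ≤ k ∧ k ≤ n ∧ actTab s w k ≠ s k)
    (hlen : permLength n (ds * w) = permLength n ds + permLength n w) :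
    TabDominates n (actTab vh u) (actTab s w) := by
  obtain ⟨ww, uw, hww, hweq, hsub, huw, hueq⟩ := hbr
  have hlen' : permLength n (ds * wordProd ww) = permLength n ds + ww.length := by
    rw [hweq, hlen]
    have := hww.2
    rw [hweq] at this
    omega
  have hmain := main_aux mu tm vh s htm ds hds hdom ww uw hsub hww.1 hlen'
  intro m l r h1m hmn
  rw [← hweq, ← hueq]
  exact hmain m l r hmn

end SpechtInduction
end
end
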